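/- Let N̂ be an independent set of points in a projective geometry P and let Ê ⊆ Ê^•(N̂). The closed, balanced edge sets of the frame matroid G(Ω(N̂, Ê)) are exactly the edge sets S whose corresponding point sets Ŝ are the intersections of Ê with cross-flats of P. -/

import Mathlib

open scoped Classical

/-! ## Graphs with parallel links and half edges -/

/-- A multigraph: each edge has a finite set of endpoints
(one endpoint for a half edge, two endpoints for a link). -/
structure MGraph (N : Type*) (E : Type*) where
  ends : E → Finset N

namespace MGraph

variable {N E : Type*} (G : MGraph N E)

/-- A link has two distinct endpoints. -/
def IsLink (e : E) : Prop := (G.ends e).card = 2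

/-- A half edge has exactly one endpoint. -/
def IsHalfEdge (e : E) : Prop := (G.ends e).card = 1

/-- The set of nodes of a set of edges. -/
def nodeSet (S : Set E) : Set N := {v | ∃ e ∈ S, v ∈ G.ends e}

/-- The nodes of a finite set of edges. -/
noncomputable def nodesOf (S : Finset E) : Finset N := S.biUnion G.ends

/-- The degree of a node in a finite edge set. -/
noncomputable def degreeIn (S : Finset E) (v : N) : ℕ :=
  (S.filter (fun e => v ∈ G.ends e)).card

/-- Two nodes joined by an edge of `S`. -/
def adjIn (S : Set E) (u v : N) : Prop := ∃ e ∈ S, u ∈ G.ends e ∧ v ∈ G.ends e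

/-- Connectivity of nodes through edges of `S`. -/
def nodeConn (S : Set E) : N → N → Prop := Relation.ReflTransGen (G.adjIn S)

/-- The components of the spanning subgraph `(N, S)`, as sets of nodes. -/
def components (S : Set E) : Set (Set N) := {W | ∃ v : N, W = {u | G.nodeConn S u v}}

/-- The number of components of the spanning subgraph `(N, S)`. -/
noncomputable def numComponents (S : Set E) : ℕ := Nat.card ↥(G.components S)

/-- The components of the non-spanning subgraph `(N(S), S)`. -/
def componentsOn (S : Set E) : Set (Set N) :=
  {W | ∃ v ∈ G.nodeSet S, W = {u | G.nodeConn S u v}}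

/-- The edges of `S` whose endpoints all lie in a node set `W`. -/
def edgesIn (S : Set E) (W : Set N) : Set E := {e | e ∈ S ∧ ∀ v ∈ G.ends e, v ∈ W}

/-- An edge set is connected if any two of its edges are joined through
consecutively intersecting edges of the set. -/
def ConnEdges (S : Set E) : Prop :=
  ∀ e ∈ S, ∀ f ∈ S, Relation.ReflTransGen
    (fun a b => a ∈ S ∧ b ∈ S ∧ ∃ v : N, v ∈ G.ends a ∧ v ∈ G.ends b) e f

/-- A circle: the edge set of a connected subgraph in which every node has degree 2. -/
def IsCircle (C : Finset E) : Prop :=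
  C.Nonempty ∧ (∀ e ∈ C, G.IsLink e) ∧ G.ConnEdges ↑C ∧
    ∀ v ∈ G.nodesOf C, G.degreeIn C v = 2

/-- A (simple, open) path joining two distinct nodes `u` and `v`. -/
def IsPath (Q : Finset E) (u v : N) : Prop :=
  Q.Nonempty ∧ u ≠ v ∧ (∀ e ∈ Q, G.IsLink e) ∧ G.ConnEdges ↑Q ∧
    u ∈ G.nodesOf Q ∧ v ∈ G.nodesOf Q ∧
    G.degreeIn Q u = 1 ∧ G.degreeIn Q v = 1 ∧
    ∀ w ∈ G.nodesOf Q, w ≠ u → w ≠ v → G.degreeIn Q w = 2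

/-- A simple graph: all edges are links and no two edges have the same endpoints. -/
def IsSimple : Prop := (∀ e : E, G.IsLink e) ∧ Function.Injective G.ends

/-- The graph is connected. -/
def IsConnected : Prop := ∀ u v : N, G.nodeConn Set.univ u v

/-- Inseparable graph: connected, and for every partition of the edge set into two
nonempty parts the two parts share at least two nodes. -/
def IsInseparable : Prop :=
  G.IsConnected ∧ ∀ A B : Set E, A.Nonempty → B.Nonempty → Disjoint A B →
    A ∪ B = Set.univ → ∃ u v : N, u ≠ v ∧ u ∈ G.nodeSet A ∧ u ∈ G.nodeSet B ∧
      v ∈ G.nodeSet A ∧ v ∈ G.nodeSet B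

/-- A linear class of circles: every member is a circle and no theta subgraph (the
union of three pairwise internally disjoint paths with the same two endpoints)
contains exactly two members of the class. -/
def IsLinearClass (B : Set (Finset E)) : Prop :=
  (∀ C ∈ B, G.IsCircle C) ∧
  ∀ u v : N, ∀ P₁ P₂ P₃ : Finset E,
    G.IsPath P₁ u v → G.IsPath P₂ u v → G.IsPath P₃ u v →
    Disjoint P₁ P₂ → Disjoint P₁ P₃ → Disjoint P₂ P₃ →
    (↑(G.nodesOf P₁) ∩ ↑(G.nodesOf P₂) : Set N) = {u, v} →
    (↑(G.nodesOf P₁) ∩ ↑(G.nodesOf P₃) : Set N) = {u, v} →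
    (↑(G.nodesOf P₂) ∩ ↑(G.nodesOf P₃) : Set N) = {u, v} →
    P₁ ∪ P₂ ∈ B → P₁ ∪ P₃ ∈ B → P₂ ∪ P₃ ∈ B

/-- A balanced edge set with respect to a class `B` of balanced circles:
no half edges, and every circle inside it belongs to `B`. -/
def IsBalancedSet (B : Set (Finset E)) (S : Set E) : Prop :=
  (∀ e ∈ S, G.IsLink e) ∧ ∀ C : Finset E, ↑C ⊆ S → G.IsCircle C → C ∈ B

/-- The number of balanced components of the spanning subgraph `(N, S)`. -/
noncomputable def numBalComponents (B : Set (Finset E)) (S : Set E) : ℕ :=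
  Nat.card ↥{W : Set N | W ∈ G.components S ∧ G.IsBalancedSet B (G.edgesIn S W)}

/-- Frame matroid rank function: `rk S = #N - b(S)`. -/
noncomputable def frameRk [Fintype N] (B : Set (Finset E)) (S : Set E) : ℕ :=
  Fintype.card N - G.numBalComponents B S

/-- Graphic (cycle) matroid rank function: `rk S = #N - c(S)`. -/
noncomputable def graphicRk [Fintype N] (S : Set E) : ℕ :=
  Fintype.card N - G.numComponents S

/-- Graphic matroid rank of a finite edge set, computed inside its own node set
(valid also for infinite graphs): `rk S = #N(S) - c(N(S), S)`. -/
noncomputable def graphicRkOn (S : Finset E) : ℕ :=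
  (G.nodesOf S).card - Nat.card ↥(G.componentsOn ↑S)

/-- Extended lift matroid rank function on `E ⊕ Unit`, where `Sum.inr ()` is the
extra point `e₀`: `rk S = #N - c(S ∩ E)` if `S ⊆ E` is balanced, and
`#N - c(S ∩ E) + 1` if `S` is unbalanced or contains `e₀`. -/
noncomputable def liftRk [Fintype N] (B : Set (Finset E)) (S : Set (E ⊕ Unit)) : ℕ :=
  if G.IsBalancedSet B {e | Sum.inl e ∈ S} ∧ Sum.inr () ∉ S then
    Fintype.card N - G.numComponents {e | Sum.inl e ∈ S}
  else Fintype.card N - G.numComponents {e | Sum.inl e ∈ S} + 1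

/-- Closed sets of the frame matroid (via the rank function; the matroid is finitary). -/
def FrameClosed [Fintype N] (B : Set (Finset E)) (S : Set E) : Prop :=
  ∀ e : E, (∃ S₀ : Finset E, ↑S₀ ⊆ S ∧
    G.frameRk B ↑(insert e S₀) = G.frameRk B ↑S₀) → e ∈ S

/-- Closed sets of the extended lift matroid. -/
def LiftClosed [Fintype N] (B : Set (Finset E)) (S : Set (E ⊕ Unit)) : Prop :=
  ∀ x : E ⊕ Unit, (∃ S₀ : Finset (E ⊕ Unit), ↑S₀ ⊆ S ∧
    G.liftRk B ↑(insert x S₀) = G.liftRk B ↑S₀) → x ∈ S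

/-- The balance-closure of an edge set. -/
def bcl (B : Set (Finset E)) (S : Set E) : Set E :=
  S ∪ {e | ∃ C ∈ B, e ∈ C ∧ ↑C ⊆ S ∪ {e}}

/-- The subgraph of all links, as a graph on the same nodes. -/
def linkGraph : MGraph N {e : E // G.IsLink e} := ⟨fun e => G.ends e.val⟩

/-- Restriction of a class of circles to the subgraph of links. -/
def linkBal (B : Set (Finset E)) : Set (Finset {e : E // G.IsLink e}) :=
  {C | C.image Subtype.val ∈ B}

/-- The subgraph on a subset of the edges (spanning all nodes). -/
def sub (D : Set E) : MGraph N ↥D := ⟨fun f => G.ends f.val⟩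

end MGraph

/-- A graph together with a distinguished class of "balanced" circles.
(It is a biased graph when the class is a linear class.) -/
structure BiasedGraph (N E : Type*) extends MGraph N E where
  Bal : Set (Finset E)

/-- The complete graph on a node set `N`. -/
def completeMGraph (N : Type*) : MGraph N {q : Finset N // q.card = 2} := ⟨Subtype.val⟩

/-- A gain graph with gain group `Γ`: each edge is given by a source, a target
(equal for a half edge) and a gain in the direction from source to target. -/
structure GainGraph (N E : Type*) (Γ : Type*) [Group Γ] extends MGraph N E where
  src : E → N
  tgt : E → N
  gain : E → Γ
  ends_eq : ∀ e : E, ends e = {src e, tgt e}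

namespace GainGraph

variable {N E Γ : Type*} [Group Γ] (Φ : GainGraph N E Γ)

/-- The gain of an edge in the direction from `u` to `v`. -/
noncomputable def ogain (e : E) (u v : N) : Γ :=
  if Φ.src e = u ∧ Φ.tgt e = v then Φ.gain e else (Φ.gain e)⁻¹

/-- A balanced circle of a gain graph: a circle whose gain function is given by a
potential on the nodes (equivalently, the product of its gains along a cyclic
orientation is the identity). -/
def BalancedCircle (C : Finset E) : Prop :=
  Φ.toMGraph.IsCircle C ∧
    ∃ θ : N → Γ, ∀ e ∈ C, Φ.gain e = (θ (Φ.src e))⁻¹ * θ (Φ.tgt e)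

/-- The biased graph `⟨Φ⟩` of a gain graph. -/
def biasedGraph : BiasedGraph N E := { Φ.toMGraph with Bal := {C | Φ.BalancedCircle C} }

end GainGraph

/-- A biased expansion of a graph `Δ` along a projection `p`: `p` is surjective,
preserves endpoints, and every circle of `Δ` with a chosen lift of all but one of
its edges has a unique completion to a balanced circle. -/
def IsBiasedExpansion {N E E' : Type*} (G : MGraph N E) (B : Set (Finset E))
    (Δ : MGraph N E') (p : E → E') : Prop :=
  Function.Surjective p ∧ (∀ e : E, G.ends e = Δ.ends (p e)) ∧
  ∀ C : Finset E', Δ.IsCircle C → ∀ e₀ ∈ C, ∀ s : E' → E,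
    (∀ f ∈ C.erase e₀, p (s f) = f) →
    ∃! t : E, p t = e₀ ∧ (C.erase e₀).image s ∪ {t} ∈ B

/-! ## Axiomatic (synthetic) projective geometry -/

/-- An axiomatic projective geometry: a point set with a line through any two
points, unique when the points are distinct, every line having at least three
points, and satisfying the Veblen–Young axiom. -/
structure ProjGeom (P : Type*) where
  line : P → P → Set P
  line_self : ∀ p : P, line p p = {p}
  line_symm : ∀ p q : P, line p q = line q p
  left_mem_line : ∀ p q : P, p ∈ line p q
  right_mem_line : ∀ p q : P, q ∈ line p q
  line_unique : ∀ p q x y : P, p ≠ q → x ∈ line p q → y ∈ line p q → x ≠ y →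
    line x y = line p q
  exists_third : ∀ p q : P, p ≠ q → ∃ r ∈ line p q, r ≠ p ∧ r ≠ q
  veblen : ∀ p q r s x : P, p ≠ q → r ≠ s → p ≠ r → q ≠ s →
    x ∈ line p q → x ∈ line r s → ∃ y, y ∈ line p r ∧ y ∈ line q s

namespace ProjGeom

variable {P : Type*} (G : ProjGeom P)

/-- A flat (subspace): a line-closed set of points. -/
def IsFlat (t : Set P) : Prop := ∀ p ∈ t, ∀ q ∈ t, G.line p q ⊆ t

/-- The span of a point set: the smallest flat containing it. -/
def span (A : Set P) : Set P := ⋂₀ {t : Set P | G.IsFlat t ∧ A ⊆ t}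

/-- An independent point set: no point is in the span of the others. -/
def Indep (A : Set P) : Prop := ∀ a ∈ A, a ∉ G.span (A \ {a})

/-- The (matroid) rank of a point set: the largest cardinality of a finite
independent subset. -/
noncomputable def rank (A : Set P) : ℕ :=
  sSup {n : ℕ | ∃ B : Finset P, ↑B ⊆ A ∧ G.Indep ↑B ∧ B.card = n}

/-- A hyperplane: a maximal proper flat. -/
def IsHyperplane (h : Set P) : Prop :=
  G.IsFlat h ∧ h ≠ Set.univ ∧ ∀ t : Set P, G.IsFlat t → h ⊆ t → t = h ∨ t = Set.univ

/-- The codimension of a flat: the least number of hyperplanes intersecting in it. -/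
noncomputable def codim (t : Set P) : ℕ :=
  sInf {n : ℕ | ∃ H : Finset (Set P), H.card = n ∧ (∀ h ∈ H, G.IsHyperplane h) ∧
    ⋂₀ ↑H = t}

variable {N : Type*}

/-- A cross-flat with respect to an independent family `ν`: a flat containing
none of the points `ν v`. -/
def crossFlat (ν : N → P) (t : Set P) : Prop := G.IsFlat t ∧ ∀ v : N, ν v ∉ t

/-- The union of all edge lines of the independent family `ν`. -/
def edgeLineUnion (ν : N → P) : Set P :=
  ⋃ (v : N) (w : N) (_ : v ≠ w), G.line (ν v) (ν w)

/-! ### The Menelaean (point) construction for the frame matroid -/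

/-- The underlying graph of the Menelaean construction `Ω(N̂, Ehat)`: a point of `Ehat`
in `N̂` is a half edge, any other point is a link joining the ends of its edge line. -/
noncomputable def menGraph (ν : N → P) (Ehat : Set P)
    (hE : ∀ x ∈ Ehat, x ∉ Set.range ν →
      ∃ pr : N × N, pr.1 ≠ pr.2 ∧ x ∈ G.line (ν pr.1) (ν pr.2)) :
    MGraph N ↥Ehat where
  ends e :=
    if h : (e : P) ∈ Set.range ν then {(show ∃ v : N, ν v = ↑e from h).choose}
    else {(hE e e.2 h).choose.1, (hE e e.2 h).choose.2}

/-- The balanced circles of the Menelaean construction: circles whose point set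
lies in a cross-flat. -/
noncomputable def menBal (ν : N → P) (Ehat : Set P)
    (hE : ∀ x ∈ Ehat, x ∉ Set.range ν →
      ∃ pr : N × N, pr.1 ≠ pr.2 ∧ x ∈ G.line (ν pr.1) (ν pr.2)) :
    Set (Finset ↥Ehat) :=
  {C | (G.menGraph ν Ehat hE).IsCircle C ∧
    ∃ t : Set P, G.crossFlat ν t ∧ ∀ e ∈ C, (e : P) ∈ t}

/-! ### The Cevian (hyperplane) construction for the frame matroid -/

/-- A Cevian arrangement over the point basis `ν`, described by its associated
graph `Γ` and its apex function: a link `e` with endpoints `v, w` has its apex on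
the edge line `v̂ŵ`, off the basis; a half edge at `v` has apex `ν v`. -/
def IsCevian {E : Type*} (ν : N → P) (Γ : MGraph N E) (apex : E → P) : Prop :=
  ∀ e : E,
    (∃ v w : N, v ≠ w ∧ Γ.ends e = ({v, w} : Finset N) ∧
      apex e ∈ G.line (ν v) (ν w) ∧ apex e ∉ Set.range ν) ∨
    (∃ v : N, Γ.ends e = ({v} : Finset N) ∧ apex e = ν v)

/-- The apical hyperplane of an edge of a Cevian arrangement. -/
def cevHyp {E : Type*} (ν : N → P) (Γ : MGraph N E) (apex : E → P) (e : E) : Set P :=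
  if Γ.IsLink e then G.span ((ν '' {u : N | u ∉ Γ.ends e}) ∪ {apex e})
  else G.span (ν '' {u : N | u ∉ Γ.ends e})

/-- The rank function of a Cevian arrangement:
the codimension of the intersection of the corresponding apical hyperplanes. -/
noncomputable def cevRk {E : Type*} (ν : N → P) (Γ : MGraph N E) (apex : E → P)
    (S : Finset E) : ℕ :=
  G.codim (⋂ e ∈ S, G.cevHyp ν Γ apex e)

/-- The balanced circles of a Cevian arrangement:
circles of deficient hyperplane-intersection rank. -/
noncomputable def cevBal {E : Type*} (ν : N → P) (Γ : MGraph N E) (apex : E → P) :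
    Set (Finset E) :=
  {C | Γ.IsCircle C ∧ G.cevRk ν Γ apex C < C.card}

/-! ### The orthographic (point) construction for the lift matroid -/

/-- The projection of the orthographic construction: each point of `Ehat` lies on the
edge line `z'(f)e₀` of a unique edge `f` of `Δ`. -/
noncomputable def orthoProj {E' : Type*} (z' : E' → P) (e₀ : P) (Ehat : Set P)
    (hE : ∀ x ∈ Ehat, ∃ f : E', x ∈ G.line (z' f) e₀) : ↥Ehat → E' :=
  fun e => (hE e e.2).choose

/-- The underlying graph of the orthographic construction `Ω₀(Ehat)`. -/
noncomputable def orthoGraph {E' : Type*} (Δ : MGraph N E') (z' : E' → P) (e₀ : P)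
    (Ehat : Set P) (hE : ∀ x ∈ Ehat, ∃ f : E', x ∈ G.line (z' f) e₀) : MGraph N ↥Ehat :=
  ⟨fun e => Δ.ends (G.orthoProj z' e₀ Ehat hE e)⟩

/-- The balanced circles of the orthographic construction:
circles spanning a cross-flat (a flat not containing `e₀`). -/
noncomputable def orthoBal {E' : Type*} (Δ : MGraph N E') (z' : E' → P) (e₀ : P)
    (Ehat : Set P) (hE : ∀ x ∈ Ehat, ∃ f : E', x ∈ G.line (z' f) e₀) : Set (Finset ↥Ehat) :=
  {C | (G.orthoGraph Δ z' e₀ Ehat hE).IsCircle C ∧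
    e₀ ∉ G.span (Subtype.val '' (↑C : Set ↥Ehat))}

end ProjGeom

/-! ### Synthetic affinographic arrangements -/

/-- A synthetic affinographic arrangement of hyperplanes in the affine geometry
obtained from the projective geometry `G` by deleting the ideal hyperplane `hinf`:
a family of hyperplanes `hP e` (given by their projective completions, with affine
parts `hP e \ hinf`), with parallel classes indexed by the edges of a graph `Δ` with
links only via the surjection `π`; hyperplanes in the class of `f` have common
ideal part `ideal f`, and the matroid of the ideal parts (rank = codimension inside
`hinf`) is the graphic matroid of `Δ`. -/
def IsAffinographic {P N E E' : Type*} [Fintype N] (G : ProjGeom P) (hinf : Set P)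
    (hP : E → Set P) (Δ : MGraph N E') (π : E → E') (ideal : E' → Set P) : Prop :=
  G.IsHyperplane hinf ∧ (∀ f : E', Δ.IsLink f) ∧ Function.Surjective π ∧
  Function.Injective hP ∧ Function.Injective ideal ∧
  (∀ e : E, G.IsHyperplane (hP e) ∧ hP e ≠ hinf ∧ hP e ∩ hinf = ideal (π e)) ∧
  ∀ S : Finset E', Δ.graphicRk (↑S : Set E') = G.codim (hinf ∩ ⋂ f ∈ S, ideal f) - 1

/-- The underlying graph of the biased graph `Ω(A)` of an affinographic
arrangement: each edge of `Δ` is replaced by the edges of its parallel class. -/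
def affinoGraph {N E E' : Type*} (Δ : MGraph N E') (π : E → E') : MGraph N E :=
  ⟨fun e => Δ.ends (π e)⟩

/-- The affine intersection `t_A(S)` of the hyperplanes of `S`. -/
def affInter {P E : Type*} (hinf : Set P) (hP : E → Set P) (S : Set E) : Set P :=
  ⋂ e ∈ S, (hP e \ hinf)

/-- The balanced circles of `Ω(A)`: digons over a single edge of `Δ` are unbalanced;
any other circle is balanced iff its affine intersection is nonempty. -/
def affinoBal {P N E E' : Type*} (_G : ProjGeom P) (hinf : Set P) (hP : E → Set P)
    (Δ : MGraph N E') (π : E → E') : Set (Finset E) :=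
  {C | (affinoGraph Δ π).IsCircle C ∧ ¬(∃ f : E', ∀ e ∈ C, π e = f) ∧
    (affInter hinf hP ↑C).Nonempty}

/-! ### Coordinatized projective spaces -/

/-- The rank of a finite set of points of a coordinatized projective space:
the dimension of the linear span of representative vectors. -/
noncomputable def projRank (F : Type*) {V : Type*} [DivisionRing F] [AddCommGroup V]
    [Module F V] (A : Finset (Projectivization F V)) : ℕ :=
  Module.finrank F ↥(Submodule.span F (Projectivization.rep '' (↑A : Set (Projectivization F V))))

/-- The edge set of the full biased graph `Ω^•`: the edges of `Ω` together with a
new half edge at every node not already supporting one. -/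
def FullE {N E : Type*} (Ω : BiasedGraph N E) : Type _ :=
  E ⊕ {v : N // ∀ e : E, Ω.ends e ≠ ({v} : Finset N)}

/-- The underlying graph of the full biased graph `Ω^•`. -/
def fullGraph {N E : Type*} (Ω : BiasedGraph N E) : MGraph N (FullE Ω) :=
  ⟨Sum.elim Ω.ends (fun v => {v.val})⟩

/-- The balanced circles of the full biased graph `Ω^•` (circles avoid half edges). -/
def fullBal {N E : Type*} (Ω : BiasedGraph N E) : Set (Finset (FullE Ω)) :=
  {C | ∃ C₀ ∈ Ω.Bal, C = C₀.image Sum.inl}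

/-! ## Statement 4 -/
/-! ## Auxiliary: synthetic projective geometry span theory -/

namespace ProjGeom

variable {P : Type*} (G : ProjGeom P)

lemma isFlat_sInter {C : Set (Set P)} (h : ∀ t ∈ C, G.IsFlat t) : G.IsFlat (⋂₀ C) := by
  intro p hp q hq x hx t ht
  exact h t ht p (hp t ht) q (hq t ht) hx

lemma isFlat_span (A : Set P) : G.IsFlat (G.span A) :=
  G.isFlat_sInter (fun _ ht => ht.1)

lemma subset_span {A : Set P} : A ⊆ G.span A := by
  intro x hx t ht
  exact ht.2 hx

lemma span_le {A t : Set P} (ht : G.IsFlat t) (hA : A ⊆ t) : G.span A ⊆ t :=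
  Set.sInter_subset_of_mem ⟨ht, hA⟩

lemma span_mono {A B : Set P} (h : A ⊆ B) : G.span A ⊆ G.span B :=
  G.span_le (G.isFlat_span B) (h.trans G.subset_span)

lemma span_le_span {A B : Set P} (h : A ⊆ G.span B) : G.span A ⊆ G.span B :=
  G.span_le (G.isFlat_span B) h

lemma span_idem (A : Set P) : G.span (G.span A) = G.span A :=
  subset_antisymm (G.span_le_span subset_rfl) (G.span_mono G.subset_span)

lemma isFlat_empty : G.IsFlat (∅ : Set P) := by
  intro p hp
  exact absurd hp (Set.notMem_empty p)

lemma span_empty : G.span (∅ : Set P) = ∅ :=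
  subset_antisymm (G.span_le G.isFlat_empty subset_rfl) (Set.empty_subset _)

lemma span_insert_of_mem {A : Set P} {y : P} (h : y ∈ G.span A) :
    G.span (insert y A) = G.span A :=
  subset_antisymm (G.span_le (G.isFlat_span A) (Set.insert_subset h G.subset_span))
    (G.span_mono (Set.subset_insert _ _))

lemma line_subset_span {A : Set P} {p q : P} (hp : p ∈ G.span A) (hq : q ∈ G.span A) :
    G.line p q ⊆ G.span A :=
  G.isFlat_span A p hp q hq

/-- Inductive description of the span. -/
inductive SpanMem (G : ProjGeom P) (A : Set P) : P → Prop
  | base {x : P} : x ∈ A → SpanMem G A x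
  | step {p q x : P} : SpanMem G A p → SpanMem G A q → x ∈ G.line p q → SpanMem G A x

lemma span_eq_spanMem (A : Set P) : G.span A = {x | SpanMem G A x} := by
  apply subset_antisymm
  · exact G.span_le (fun p hp q hq x hx => SpanMem.step hp hq hx) (fun x hx => SpanMem.base hx)
  · intro x hx
    induction hx with
    | base h => exact G.subset_span h
    | step _ _ hl ih1 ih2 => exact G.line_subset_span ih1 ih2 hl

lemma mem_span_finitary {A : Set P} {x : P} (hx : x ∈ G.span A) :
    ∃ F : Finset P, ↑F ⊆ A ∧ x ∈ G.span (↑F : Set P) := by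
  rw [G.span_eq_spanMem] at hx
  induction hx with
  | @base y h => exact ⟨{y}, by simpa using h, G.subset_span (by simp)⟩
  | @step p q y _ _ hl ih1 ih2 =>
    obtain ⟨F1, hF1, hp⟩ := ih1
    obtain ⟨F2, hF2, hq⟩ := ih2
    refine ⟨F1 ∪ F2, by simp [Set.union_subset_iff, hF1, hF2, Finset.coe_union], ?_⟩
    have h1 : p ∈ G.span (↑(F1 ∪ F2) : Set P) := by
      refine G.span_mono ?_ hp
      simp [Finset.coe_union]
    have h2 : q ∈ G.span (↑(F1 ∪ F2) : Set P) := by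
      refine G.span_mono ?_ hq
      simp [Finset.coe_union]
    exact G.line_subset_span h1 h2 hl

/-- The cone over a flat from an external point is a flat. -/
lemma cone_flat {F : Set P} (hF : G.IsFlat F) {q : P} (hq : q ∉ F) :
    G.IsFlat (insert q {x | ∃ a ∈ F, x ∈ G.line q a}) := by
  set C := insert q {x | ∃ a ∈ F, x ∈ G.line q a} with hC
  have hFC : F ⊆ C := fun a ha => Or.inr ⟨a, ha, G.right_mem_line q a⟩
  have hqC : q ∈ C := Or.inl rfl
  have H1 : ∀ a ∈ F, ∀ y ∈ C, G.line a y ⊆ C := by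
    intro a ha y hy z hz
    rcases hy with rfl | ⟨b, hb, hyb⟩
    · exact Or.inr ⟨a, ha, by rwa [G.line_symm] at hz⟩
    by_cases hyF : y ∈ F
    · exact hFC (hF a ha y hyF hz)
    by_cases hyq : y = q
    · subst hyq; exact Or.inr ⟨a, ha, by rwa [G.line_symm] at hz⟩
    have hyb' : y ≠ b := fun h => hyF (h ▸ hb)
    by_cases hza : z = a
    · exact hza ▸ hFC ha
    by_cases hzy : z = y
    · exact hzy ▸ Or.inr ⟨b, hb, hyb⟩
    by_cases hzq : z = q
    · exact hzq ▸ hqC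
    have hqb : q ≠ b := fun h => hq (h ▸ hb)
    have hay : a ≠ y := fun h => hyF (h ▸ ha)
    by_cases hab : a = b
    · rw [← hab] at hyb
      have hl : G.line a y = G.line q a :=
        G.line_unique q a a y (fun h => hq (h ▸ ha)) (G.right_mem_line q a) hyb hay
      exact Or.inr ⟨a, ha, hl ▸ hz⟩
    have hyza : y ∈ G.line z a := by
      have hl : G.line z a = G.line a y :=
        G.line_unique a y z a hay hz (G.left_mem_line a y) hza
      rw [hl]; exact G.right_mem_line a y
    obtain ⟨w, hw1, hw2⟩ := G.veblen z a q b y hza hqb hzq hab hyza hyb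
    have hwF : w ∈ F := hF a ha b hb hw2
    by_cases hwz : w = z
    · exact hwz ▸ hFC hwF
    have hwq : w ≠ q := fun h => hq (h ▸ hwF)
    have hl : G.line q w = G.line z q :=
      G.line_unique z q q w hzq (G.right_mem_line z q) hw1 (Ne.symm hwq)
    exact Or.inr ⟨w, hwF, by rw [hl]; exact G.left_mem_line z q⟩
  intro x hx y hy z hz
  by_cases hxy : x = y
  · subst hxy
    rw [G.line_self] at hz
    have : z = x := hz
    exact this ▸ hx
  by_cases hxq : x = q
  · obtain ⟨b, hb, hyb⟩ : ∃ b ∈ F, y ∈ G.line q b := by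
      rcases hy with rfl | h
      · exact absurd hxq hxy
      · exact h
    have hz' : z ∈ G.line q y := hxq ▸ hz
    by_cases hyb' : y = b
    · exact Or.inr ⟨b, hb, hyb' ▸ hz'⟩
    have hqb : q ≠ b := fun h => hq (h ▸ hb)
    have hl : G.line q y = G.line q b :=
      G.line_unique q b q y hqb (G.left_mem_line q b) hyb (fun h => hxy (hxq.trans h))
    exact Or.inr ⟨b, hb, hl ▸ hz'⟩
  by_cases hyq : y = q
  · obtain ⟨a, ha, hxa⟩ : ∃ a ∈ F, x ∈ G.line q a := by
      rcases hx with rfl | h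
      · exact absurd rfl hxq
      · exact h
    have hz' : z ∈ G.line q x := by
      rw [G.line_symm]; exact hyq ▸ hz
    by_cases hxa' : x = a
    · exact Or.inr ⟨a, ha, by rw [← hxa']; exact hz'⟩
    have hqa : q ≠ a := fun h => hq (h ▸ ha)
    have hl : G.line q x = G.line q a :=
      G.line_unique q a q x hqa (G.left_mem_line q a) hxa (Ne.symm hxq)
    exact Or.inr ⟨a, ha, hl ▸ hz'⟩
  obtain ⟨a, ha, hxa⟩ : ∃ a ∈ F, x ∈ G.line q a := by
    rcases hx with rfl | h
    · exact absurd rfl hxq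
    · exact h
  obtain ⟨b, hb, hyb⟩ : ∃ b ∈ F, y ∈ G.line q b := by
    rcases hy with rfl | h
    · exact absurd rfl hyq
    · exact h
  by_cases hxF : x ∈ F
  · exact H1 x hxF y hy hz
  by_cases hyF : y ∈ F
  · exact H1 y hyF x hx (by rwa [G.line_symm] at hz)
  have hxa' : x ≠ a := fun h => hxF (h ▸ ha)
  have hyb' : y ≠ b := fun h => hyF (h ▸ hb)
  by_cases hab : a = b
  · subst hab
    have hqa : q ≠ a := fun h => hq (h ▸ ha)
    have hl : G.line x y = G.line q a := G.line_unique q a x y hqa hxa hyb hxy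
    exact Or.inr ⟨a, ha, hl ▸ hz⟩
  have hqxa : q ∈ G.line x a := by
    have hl : G.line x a = G.line q a :=
      G.line_unique q a x a (fun h => hq (h ▸ ha)) hxa (G.right_mem_line q a) hxa'
    rw [hl]; exact G.left_mem_line q a
  have hqyb : q ∈ G.line y b := by
    have hl : G.line y b = G.line q b :=
      G.line_unique q b y b (fun h => hq (h ▸ hb)) hyb (G.right_mem_line q b) hyb'
    rw [hl]; exact G.left_mem_line q b
  obtain ⟨w, hw1, hw2⟩ := G.veblen x a y b q hxa' hyb' hxy hab hqxa hqyb
  have hwF : w ∈ F := hF a ha b hb hw2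
  by_cases hwz : w = z
  · exact hwz ▸ hFC hwF
  by_cases hwx : w = x
  · exact absurd (hwx ▸ hwF) hxF
  have hl : G.line w x = G.line x y :=
    G.line_unique x y w x hxy hw1 (G.left_mem_line x y) hwx
  exact H1 w hwF x hx (by rw [hl]; exact hz)

lemma span_insert_eq_cone {A : Set P} {q : P} (hq : q ∉ G.span A) :
    G.span (insert q A) = insert q {x | ∃ a ∈ G.span A, x ∈ G.line q a} := by
  apply subset_antisymm
  · apply G.span_le (G.cone_flat (G.isFlat_span A) hq)
    intro x hx
    rcases hx with rfl | hx
    · exact Or.inl rfl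
    · exact Or.inr ⟨x, G.subset_span hx, G.right_mem_line q x⟩
  · intro x hx
    rcases hx with rfl | ⟨a, ha, hxa⟩
    · exact G.subset_span (Set.mem_insert _ _)
    · have h1 : q ∈ G.span (insert q A) := G.subset_span (Set.mem_insert _ _)
      have h2 : a ∈ G.span (insert q A) := G.span_mono (Set.subset_insert _ _) ha
      exact G.line_subset_span h1 h2 hxa

lemma exchange {A : Set P} {p q : P} (hp : p ∈ G.span (insert q A)) (hpA : p ∉ G.span A) :
    q ∈ G.span (insert p A) := by
  by_cases hq : q ∈ G.span A
  · exact absurd (by rwa [G.span_insert_of_mem hq] at hp) hpA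
  rw [G.span_insert_eq_cone hq] at hp
  rcases hp with rfl | ⟨a, ha, hpa⟩
  · exact G.subset_span (Set.mem_insert _ _)
  by_cases hpq : p = q
  · exact hpq ▸ G.subset_span (Set.mem_insert _ _)
  have hqa : q ≠ a := fun h => hq (h ▸ ha)
  have hpa' : p ≠ a := fun h => hpA (h ▸ ha)
  have hl : G.line p a = G.line q a :=
    G.line_unique q a p a hqa hpa (G.right_mem_line q a) hpa'
  have hqmem : q ∈ G.line p a := by rw [hl]; exact G.left_mem_line q a
  exact G.line_subset_span (G.subset_span (Set.mem_insert _ _))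
    (G.span_mono (Set.subset_insert _ _) ha) hqmem

/-- Finite independent sets. -/
def FinIndep (G : ProjGeom P) (B : Finset P) : Prop :=
  ∀ b ∈ B, b ∉ G.span (↑(B.erase b) : Set P)

/-- The Steinitz bound. -/
lemma steinitz_aux : ∀ (n : ℕ) (B I : Finset P), (I \ B).card = n → G.FinIndep I →
    ↑I ⊆ G.span (↑B : Set P) → I.card ≤ B.card := by
  intro n
  induction n using Nat.strong_induction_on with
  | _ n ih =>
    intro B I hn hI hIB
    by_cases hsub : I ⊆ B
    · exact Finset.card_le_card hsub
    obtain ⟨x, hxI, hxB⟩ := Finset.not_subset.mp hsub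
    have hex : ∃ m : ℕ, ∃ B' : Finset P, B' ⊆ B \ I ∧
        x ∈ G.span (↑(B' ∪ B ∩ I) : Set P) ∧ B'.card = m := by
      refine ⟨(B \ I).card, B \ I, subset_rfl, ?_, rfl⟩
      rw [Finset.sdiff_union_inter]
      exact hIB (by exact_mod_cast hxI)
    obtain ⟨B', hB'sub, hxspan, hB'card⟩ := Nat.find_spec hex
    have hB'ne : B'.Nonempty := by
      rcases Finset.eq_empty_or_nonempty B' with rfl | h
      · exfalso
        apply hI x hxI
        rw [Finset.empty_union] at hxspan
        have hsubx : (↑(B ∩ I) : Set P) ⊆ ↑(I.erase x) := by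
          intro y hy
          have hy' : y ∈ B ∩ I := by exact_mod_cast hy
          have h1 := Finset.mem_inter.mp hy'
          have : y ∈ I.erase x := Finset.mem_erase.mpr ⟨fun hyx => hxB (hyx ▸ h1.1), h1.2⟩
          exact_mod_cast this
        exact G.span_mono hsubx hxspan
      · exact h
    obtain ⟨b, hb⟩ := hB'ne
    have hbBI : b ∈ B \ I := hB'sub hb
    have hmin : x ∉ G.span (↑(B'.erase b ∪ B ∩ I) : Set P) := by
      intro hmem
      have hle := Nat.find_min' hex
        ⟨B'.erase b, (Finset.erase_subset _ _).trans hB'sub, hmem, rfl⟩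
      have h1 : (B'.erase b).card = B'.card - 1 := Finset.card_erase_of_mem hb
      have h2 : 1 ≤ B'.card := Finset.card_pos.mpr ⟨b, hb⟩
      omega
    have hxcone : x ∈ G.span (insert b (↑(B'.erase b ∪ B ∩ I) : Set P)) := by
      have he : insert b (B'.erase b ∪ B ∩ I) = B' ∪ B ∩ I := by
        rw [← Finset.insert_union, Finset.insert_erase hb]
      have : (insert b (↑(B'.erase b ∪ B ∩ I) : Set P)) = ↑(B' ∪ B ∩ I) := by
        rw [← Finset.coe_insert, he]
      rw [this]
      exact hxspan
    have hbx : b ∈ G.span (insert x (↑(B'.erase b ∪ B ∩ I) : Set P)) :=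
      G.exchange hxcone hmin
    have hbnotI : b ∉ I := (Finset.mem_sdiff.mp hbBI).2
    have hbB : b ∈ B := (Finset.mem_sdiff.mp hbBI).1
    set B₂ := insert x (B.erase b) with hB₂
    have hspan2 : (↑B : Set P) ⊆ G.span (↑B₂ : Set P) := by
      intro y hy
      by_cases hyb : y = b
      · subst hyb
        refine G.span_mono ?_ hbx
        intro z hz
        rcases hz with rfl | hz
        · exact Finset.mem_coe.mpr (Finset.mem_insert_self _ _)
        · apply Finset.mem_coe.mpr
          have hzB₂ : z ∈ B₂ := by
            rcases Finset.mem_union.mp (Finset.mem_coe.mp hz) with hz1 | hz2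
            · have hzB' : z ∈ B' := Finset.mem_of_mem_erase hz1
              have hmem := Finset.mem_sdiff.mp (hB'sub hzB')
              exact Finset.mem_insert_of_mem
                (Finset.mem_erase.mpr ⟨Finset.ne_of_mem_erase hz1, hmem.1⟩)
            · have h2 := Finset.mem_inter.mp hz2
              exact Finset.mem_insert_of_mem
                (Finset.mem_erase.mpr ⟨fun h => hbnotI (h ▸ h2.2), h2.1⟩)
          exact hzB₂
      · apply G.subset_span
        exact Finset.mem_coe.mpr (Finset.mem_insert_of_mem
          (Finset.mem_erase.mpr ⟨hyb, Finset.mem_coe.mp hy⟩))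
    have hIB2 : (↑I : Set P) ⊆ G.span (↑B₂ : Set P) :=
      fun y hy => G.span_le_span hspan2 (hIB hy)
    have hcard2 : B₂.card ≤ B.card := by
      have h1 : B₂.card ≤ (B.erase b).card + 1 := Finset.card_insert_le _ _
      have h2 : (B.erase b).card = B.card - 1 := Finset.card_erase_of_mem hbB
      have h3 : 1 ≤ B.card := Finset.card_pos.mpr ⟨b, hbB⟩
      omega
    have hdrop : (I \ B₂).card < n := by
      have hsub2 : I \ B₂ ⊆ (I \ B).erase x := by
        intro y hy
        obtain ⟨hyI, hyB₂⟩ := Finset.mem_sdiff.mp hy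
        have hyx : y ≠ x := by rintro rfl; exact hyB₂ (Finset.mem_insert_self _ _)
        have hyB : y ∉ B := by
          intro hyBmem
          by_cases hyb : y = b
          · exact hbnotI (hyb ▸ hyI)
          · exact hyB₂ (Finset.mem_insert_of_mem (Finset.mem_erase.mpr ⟨hyb, hyBmem⟩))
        exact Finset.mem_erase.mpr ⟨hyx, Finset.mem_sdiff.mpr ⟨hyI, hyB⟩⟩
      have hxmem : x ∈ I \ B := Finset.mem_sdiff.mpr ⟨hxI, hxB⟩
      calc (I \ B₂).card ≤ ((I \ B).erase x).card := Finset.card_le_card hsub2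
        _ = (I \ B).card - 1 := Finset.card_erase_of_mem hxmem
        _ < n := by
            have : 1 ≤ (I \ B).card := Finset.card_pos.mpr ⟨x, hxmem⟩
            omega
    exact (ih _ hdrop B₂ I rfl hI hIB2).trans hcard2

lemma steinitz {B I : Finset P} (hI : G.FinIndep I) (hIB : ↑I ⊆ G.span (↑B : Set P)) :
    I.card ≤ B.card :=
  G.steinitz_aux _ B I rfl hI hIB

end ProjGeom
/-! ## Auxiliary: graph lemmas -/

namespace MGraph

variable {N E : Type*} (G : MGraph N E)

lemma adjIn_symm {S : Set E} {u v : N} (h : G.adjIn S u v) : G.adjIn S v u := by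
  obtain ⟨e, he, hu, hv⟩ := h
  exact ⟨e, he, hv, hu⟩

lemma nodeConn_refl (S : Set E) (u : N) : G.nodeConn S u u := Relation.ReflTransGen.refl

lemma nodeConn_symm {S : Set E} {u v : N} (h : G.nodeConn S u v) : G.nodeConn S v u :=
  (@Relation.ReflTransGen.stdSymm _ _ ⟨fun _ _ h' => G.adjIn_symm h'⟩).symm _ _ h

lemma nodeConn_trans {S : Set E} {u v w : N} (h1 : G.nodeConn S u v)
    (h2 : G.nodeConn S v w) : G.nodeConn S u w :=
  Relation.ReflTransGen.trans h1 h2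

lemma nodeConn_mono {S T : Set E} (hST : S ⊆ T) {u v : N} (h : G.nodeConn S u v) :
    G.nodeConn T u v := by
  refine Relation.ReflTransGen.mono ?_ u v h
  rintro a b ⟨e, he, ha, hb⟩
  exact ⟨e, hST he, ha, hb⟩

lemma nodeConn_of_adj {S : Set E} {u v : N} (h : G.adjIn S u v) : G.nodeConn S u v :=
  Relation.ReflTransGen.single h

/-- Adding one edge: characterization of the new connectivity. -/
lemma nodeConn_insert_iff {S : Set E} {e : E} {a b : N} :
    G.nodeConn (insert e S) a b ↔ G.nodeConn S a b ∨
      ∃ u ∈ G.ends e, ∃ v ∈ G.ends e, G.nodeConn S a u ∧ G.nodeConn S v b := by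
  constructor
  · intro h
    induction h with
    | refl => exact Or.inl (G.nodeConn_refl S a)
    | @tail c d hcd hadj ih =>
      obtain ⟨f, hf, hc, hd⟩ := hadj
      rcases hf with rfl | hfS
      · rcases ih with ih | ⟨u, hu, v, hv, h1, h2⟩
        · exact Or.inr ⟨c, hc, d, hd, ih, G.nodeConn_refl S d⟩
        · exact Or.inr ⟨u, hu, d, hd, h1, G.nodeConn_refl S d⟩
      · rcases ih with ih | ⟨u, hu, v, hv, h1, h2⟩
        · exact Or.inl (ih.tail ⟨f, hfS, hc, hd⟩)
        · exact Or.inr ⟨u, hu, v, hv, h1, h2.tail ⟨f, hfS, hc, hd⟩⟩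
  · intro h
    rcases h with h | ⟨u, hu, v, hv, h1, h2⟩
    · exact G.nodeConn_mono (Set.subset_insert e S) h
    · refine (G.nodeConn_mono (Set.subset_insert e S) h1).trans ?_
      refine Relation.ReflTransGen.head ⟨e, Set.mem_insert e S, hu, hv⟩ ?_
      exact G.nodeConn_mono (Set.subset_insert e S) h2

/-- Adding an edge all whose endpoints are already mutually connected does not
change connectivity. -/
lemma nodeConn_insert_eq {S : Set E} {e : E}
    (h : ∀ u ∈ G.ends e, ∀ v ∈ G.ends e, G.nodeConn S u v) :
    G.nodeConn (insert e S) = G.nodeConn S := by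
  funext a b
  apply propext
  rw [G.nodeConn_insert_iff]
  constructor
  · rintro (h' | ⟨u, hu, v, hv, h1, h2⟩)
    · exact h'
    · exact (h1.trans (h u hu v hv)).trans h2
  · exact Or.inl

/-- The connected component of a node. -/
def compOf (S : Set E) (v : N) : Set N := {u | G.nodeConn S u v}

lemma compOf_mem_components (S : Set E) (v : N) : G.compOf S v ∈ G.components S := ⟨v, rfl⟩

lemma mem_compOf_self (S : Set E) (v : N) : v ∈ G.compOf S v := G.nodeConn_refl S v

lemma compOf_eq_of_conn {S : Set E} {u v : N} (h : G.nodeConn S u v) :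
    G.compOf S u = G.compOf S v := by
  ext x
  exact ⟨fun hx => hx.trans h, fun hx => hx.trans (G.nodeConn_symm h)⟩

lemma eq_compOf_of_mem {S : Set E} {W : Set N} (hW : W ∈ G.components S) {u : N}
    (hu : u ∈ W) : W = G.compOf S u := by
  obtain ⟨v, rfl⟩ := hW
  exact (G.compOf_eq_of_conn hu).symm

lemma mem_compOf_iff {S : Set E} {u v : N} : u ∈ G.compOf S v ↔ G.nodeConn S u v :=
  Iff.rfl

/-- Edges within a class have all their endpoints in it, given one endpoint is. -/
lemma ends_subset_compOf {S : Set E} {e : E} (he : e ∈ S) {u : N} {w : N}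
    (hu : u ∈ G.ends e) (hw : w ∈ G.ends e) : G.nodeConn S u w :=
  G.nodeConn_of_adj ⟨e, he, hu, hw⟩

lemma isBalancedSet_mono {B : Set (Finset E)} {S T : Set E}
    (h : G.IsBalancedSet B T) (hST : S ⊆ T) : G.IsBalancedSet B S :=
  ⟨fun e he => h.1 e (hST he), fun C hC hcirc => h.2 C (hC.trans hST) hcirc⟩

lemma numBalComponents_eq_ncard (B : Set (Finset E)) (S : Set E) :
    G.numBalComponents B S =
      {W : Set N | W ∈ G.components S ∧ G.IsBalancedSet B (G.edgesIn S W)}.ncard :=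
  Nat.card_coe_set_eq _

lemma ncard_le_card_of_subset_components [Fintype N] {S : Set E} {A : Set (Set N)}
    (hA : A ⊆ G.components S) : A.ncard ≤ Fintype.card N := by
  cases isEmpty_or_nonempty N with
  | inl h =>
    have hAe : A = ∅ := by
      rw [Set.eq_empty_iff_forall_notMem]
      intro W hW
      obtain ⟨v, -⟩ := hA hW
      exact h.false v
    simp [hAe]
  | inr h =>
    have hle : A.ncard ≤ (Set.univ : Set N).ncard := by
      apply Set.ncard_le_ncard_of_injOn (fun W => Classical.epsilon (· ∈ W))
      · intro W _; exact Set.mem_univ _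
      · intro W hW W' hW' heq
        have hWn : ∃ x, x ∈ W := by
          obtain ⟨v, rfl⟩ := hA hW
          exact ⟨v, G.mem_compOf_self S v⟩
        have hW'n : ∃ x, x ∈ W' := by
          obtain ⟨v, rfl⟩ := hA hW'
          exact ⟨v, G.mem_compOf_self S v⟩
        have h1 : Classical.epsilon (· ∈ W) ∈ W := Classical.epsilon_spec hWn
        have h2 : Classical.epsilon (· ∈ W') ∈ W' := Classical.epsilon_spec hW'n
        have heq' : Classical.epsilon (· ∈ W) = Classical.epsilon (· ∈ W') := heq
        calc W = G.compOf S (Classical.epsilon (· ∈ W)) := G.eq_compOf_of_mem (hA hW) h1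
          _ = G.compOf S (Classical.epsilon (· ∈ W')) := by rw [heq']
          _ = W' := (G.eq_compOf_of_mem (hA hW') h2).symm
    simpa [Set.ncard_univ, Nat.card_eq_fintype_card] using hle

/-! ### Walks and paths -/

/-- Walks of a given length, through link edges of `S`. -/
inductive WalkN (G : MGraph N E) (S : Set E) : N → N → ℕ → Prop
  | refl (u : N) : WalkN G S u u 0
  | head {u w v : N} {m : ℕ} (e : E) (he : e ∈ S) (hends : G.ends e = {u, w})
      (hne : u ≠ w) (h : WalkN G S w v m) : WalkN G S u v (m + 1)

lemma WalkN.nodeConn {S : Set E} {u v : N} {m : ℕ} (h : G.WalkN S u v m) :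
    G.nodeConn S u v := by
  induction h with
  | refl u => exact G.nodeConn_refl S u
  | head e he hends hne _ ih =>
    refine Relation.ReflTransGen.head ⟨e, he, ?_, ?_⟩ ih
    · rw [hends]; exact Finset.mem_insert_self _ _
    · rw [hends]; exact Finset.mem_insert_of_mem (Finset.mem_singleton_self _)

lemma WalkN.tailEdge {S : Set E} {u c : N} {m : ℕ} (h : G.WalkN S u c m) {f : E} {d : N}
    (hf : f ∈ S) (hends : G.ends f = {c, d}) (hne : c ≠ d) : G.WalkN S u d (m + 1) := by
  induction h with
  | refl u => exact WalkN.head f hf hends hne (WalkN.refl d)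
  | head e he hends' hne' h ih => exact WalkN.head e he hends' hne' (ih hends hne)

lemma exists_walkN {S : Set E} (hS : ∀ e ∈ S, (G.ends e).card = 2) {u v : N}
    (h : G.nodeConn S u v) : ∃ m : ℕ, G.WalkN S u v m := by
  induction h with
  | refl => exact ⟨0, WalkN.refl u⟩
  | @tail c d hcd hadj ih =>
    obtain ⟨m, hw⟩ := ih
    obtain ⟨f, hf, hc, hd⟩ := hadj
    by_cases hcd' : c = d
    · exact ⟨m, hcd' ▸ hw⟩
    · have hends : G.ends f = {c, d} := by
        apply (Finset.eq_of_subset_of_card_le ?_ ?_).symm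
        · intro x hx
          rcases Finset.mem_insert.mp hx with rfl | hx
          · exact hc
          · rwa [Finset.mem_singleton.mp hx]
        · rw [hS f hf, Finset.card_pair hcd']
      exact ⟨m + 1, WalkN.tailEdge G hw hf hends hcd'⟩

/-- Functional description of walks. -/
def IsWalk (S : Set E) (m : ℕ) (vv : ℕ → N) (ee : ℕ → E) : Prop :=
  ∀ i < m, ee i ∈ S ∧ G.ends (ee i) = {vv i, vv (i + 1)} ∧ vv i ≠ vv (i + 1)

lemma WalkN.toIsWalk {S : Set E} {u v : N} {m : ℕ} (h : G.WalkN S u v m) (hm : 1 ≤ m) :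
    ∃ (vv : ℕ → N) (ee : ℕ → E), G.IsWalk S m vv ee ∧ vv 0 = u ∧ vv m = v := by
  induction h with
  | refl u => omega
  | @head a b c m' e he hends hne h ih =>
    rcases Nat.eq_zero_or_pos m' with rfl | hm'
    · have hbc : b = c := by cases h; rfl
      subst hbc
      refine ⟨fun i => if i = 0 then a else b, fun _ => e, ?_, by simp, by simp⟩
      intro i hi
      have hi0 : i = 0 := by omega
      subst hi0
      refine ⟨he, ?_, ?_⟩
      · simpa using hends
      · simpa using hne
    · obtain ⟨vv, ee, hw, h0, hmv⟩ := ih hm'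
      refine ⟨fun i => if i = 0 then a else vv (i - 1), fun i => if i = 0 then e else ee (i - 1),
        ?_, by simp, ?_⟩
      · intro i hi
        rcases Nat.eq_zero_or_pos i with rfl | hipos
        · refine ⟨he, ?_, ?_⟩
          · simpa [h0] using hends
          · simpa [h0] using hne
        · have h1 : ¬ (i = 0) := by omega
          have h2 : ¬ (i + 1 = 0) := by omega
          have h3 : i - 1 + 1 = i := by omega
          obtain ⟨g1, g2, g3⟩ := hw (i - 1) (by omega)
          rw [h3] at g2 g3
          simp only [h1, h2, if_false]
          exact ⟨g1, g2, g3⟩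
      · have hne0 : ¬ (m' + 1 = 0) := by omega
        simp only [hne0, if_false]
        simpa using hmv

/-- Simple paths: walks with no repeated nodes. -/
lemma exists_path {S : Set E} {u v : N} {m₀ : ℕ} {vv₀ : ℕ → N} {ee₀ : ℕ → E}
    (hw₀ : G.IsWalk S m₀ vv₀ ee₀) (h0 : vv₀ 0 = u) (hm : vv₀ m₀ = v) :
    ∃ (m : ℕ) (vv : ℕ → N) (ee : ℕ → E), G.IsWalk S m vv ee ∧ vv 0 = u ∧ vv m = v ∧
      (∀ i ≤ m, ∀ j ≤ m, vv i = vv j → i = j) := by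
  have main : ∀ (n : ℕ) (m : ℕ) (vv : ℕ → N) (ee : ℕ → E), m ≤ n →
      G.IsWalk S m vv ee → vv 0 = u → vv m = v →
      ∃ (m' : ℕ) (vv' : ℕ → N) (ee' : ℕ → E), G.IsWalk S m' vv' ee' ∧ vv' 0 = u ∧
        vv' m' = v ∧ (∀ i ≤ m', ∀ j ≤ m', vv' i = vv' j → i = j) := by
    intro n
    induction n with
    | zero =>
      intro m vv ee hle hw h0 hm
      have hm0 : m = 0 := by omega
      subst hm0
      exact ⟨0, vv, ee, hw, h0, hm, fun i hi j hj _ => by omega⟩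
    | succ n ih =>
      intro m vv ee hle hw h0 hm
      by_cases hrep : ∃ i, ∃ j, i < j ∧ j ≤ m ∧ vv i = vv j
      · obtain ⟨i, j, hij, hjm, heq⟩ := hrep
        set d := j - i with hd
        have hd1 : 1 ≤ d := by omega
        set m' := m - d with hm'
        set vv' : ℕ → N := fun k => if k ≤ i then vv k else vv (k + d) with hvv'
        set ee' : ℕ → E := fun k => if k < i then ee k else ee (k + d) with hee'
        have him' : i ≤ m' := by omega
        have hw' : G.IsWalk S m' vv' ee' := by
          intro k hk
          by_cases hki : k < i
          · obtain ⟨h1, h2, h3⟩ := hw k (by omega)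
            have e1 : vv' k = vv k := by
              have hki2 : k ≤ i := by omega
              simp [hvv', hki2]
            have e2 : vv' (k + 1) = vv (k + 1) := by
              have hki2 : k + 1 ≤ i := by omega
              simp [hvv', hki2]
            have e3 : ee' k = ee k := by simp [hee', hki]
            rw [e3, e1, e2]
            exact ⟨h1, h2, h3⟩
          · obtain ⟨h1, h2, h3⟩ := hw (k + d) (by omega)
            have e1 : vv' k = vv (k + d) := by
              by_cases hki' : k ≤ i
              · have hki'' : k = i := by omega
                subst hki''
                have hkd : k + d = j := by omega
                simp only [hvv', if_pos le_rfl, hkd, ← heq]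
              · simp [hvv', hki']
            have e2 : vv' (k + 1) = vv (k + d + 1) := by
              have hgt : ¬ (k + 1 ≤ i) := by omega
              have harith : k + 1 + d = k + d + 1 := by omega
              simp only [hvv', hgt, if_false, harith]
            have e3 : ee' k = ee (k + d) := by simp [hee', hki]
            rw [e3, e1, e2]
            exact ⟨h1, h2, h3⟩
        have h0' : vv' 0 = u := by
          simp only [hvv', if_pos (Nat.zero_le i)]
          exact h0
        have hm'' : vv' m' = v := by
          by_cases hmi : m' ≤ i
          · have h1 : m' = i := by omega
            have h2 : j = m := by omega
            have hv : vv' m' = vv i := by simp [hvv', h1]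
            rw [hv, heq, h2]
            exact hm
          · simp only [hvv', if_neg hmi]
            have harith : m' + d = m := by omega
            rw [harith]
            exact hm
        exact ih m' vv' ee' (by omega) hw' h0' hm''
      · push_neg at hrep
        refine ⟨m, vv, ee, hw, h0, hm, ?_⟩
        intro i hi j hj heq
        by_contra hne
        rcases Nat.lt_or_ge i j with h' | h'
        · exact hrep i j h' hj heq
        · have hji : j < i := by omega
          exact hrep j i hji hi heq.symm
  exact main m₀ m₀ vv₀ ee₀ le_rfl hw₀ h0 hm

lemma IsWalk.conn_start {S : Set E} {m : ℕ} {vv : ℕ → N} {ee : ℕ → E}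
    (hw : G.IsWalk S m vv ee) : ∀ i ≤ m, G.nodeConn S (vv 0) (vv i) := by
  intro i hi
  induction i with
  | zero => exact G.nodeConn_refl S _
  | succ k ihk =>
    obtain ⟨h1, h2, _⟩ := hw k (by omega)
    refine (ihk (by omega)).tail ⟨ee k, h1, ?_, ?_⟩
    · rw [h2]; exact Finset.mem_insert_self _ _
    · rw [h2]; exact Finset.mem_insert_of_mem (Finset.mem_singleton_self _)

end MGraph
/-! ## Circles from paths -/

namespace MGraph

variable {N E : Type*} (G : MGraph N E)

lemma circle_of_path {S : Set E} {m : ℕ} {vv : ℕ → N} {ee : ℕ → E}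
    (hw : G.IsWalk S m vv ee) (hinj : ∀ i ≤ m, ∀ j ≤ m, vv i = vv j → i = j)
    (hm : 1 ≤ m) {e : E} (hends : G.ends e = {vv 0, vv m}) (hnew : ∀ i < m, e ≠ ee i) :
    ∃ C : Finset E, G.IsCircle C ∧ (∀ f, f ∈ C ↔ f = e ∨ ∃ i < m, f = ee i) := by
  classical
  set cc : ℕ → E := fun i => if i < m then ee i else e with hcc
  set C : Finset E := (Finset.range (m + 1)).image cc with hC
  have hccm : cc m = e := by simp [hcc]
  have hcclt : ∀ i < m, cc i = ee i := fun i hi => by simp [hcc, hi]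
  have hmemC : ∀ f, f ∈ C ↔ f = e ∨ ∃ i < m, f = ee i := by
    intro f
    simp only [hC, Finset.mem_image, Finset.mem_range]
    constructor
    · rintro ⟨i, hi, rfl⟩
      by_cases him : i < m
      · exact Or.inr ⟨i, him, hcclt i him⟩
      · left; have hieq : i = m := by omega
        rw [hieq, hccm]
    · rintro (rfl | ⟨i, hi, rfl⟩)
      · exact ⟨m, by omega, hccm⟩
      · exact ⟨i, by omega, hcclt i hi⟩
  have hvne : vv 0 ≠ vv m := fun h => by have := hinj 0 (by omega) m le_rfl h; omega
  have hends1 : ∀ i < m, G.ends (cc i) = {vv i, vv (i + 1)} := by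
    intro i hi
    rw [hcclt i hi]
    exact (hw i hi).2.1
  have hends2 : G.ends (cc m) = {vv 0, vv m} := by rw [hccm]; exact hends
  have hccinj : ∀ i ≤ m, ∀ j ≤ m, cc i = cc j → i = j := by
    intro i hi j hj heq
    by_cases him : i < m <;> by_cases hjm : j < m
    · rw [hcclt i him, hcclt j hjm] at heq
      have he1 : G.ends (ee i) = {vv i, vv (i + 1)} := (hw i him).2.1
      have he2 : G.ends (ee j) = {vv j, vv (j + 1)} := (hw j hjm).2.1
      rw [heq, he2] at he1
      have m1 : vv i ∈ ({vv i, vv (i + 1)} : Finset N) := Finset.mem_insert_self _ _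
      rw [← he1] at m1
      have m2 : vv (i + 1) ∈ ({vv i, vv (i + 1)} : Finset N) :=
        Finset.mem_insert_of_mem (Finset.mem_singleton_self _)
      rw [← he1] at m2
      have c1 : i = j ∨ i = j + 1 := by
        rcases Finset.mem_insert.mp m1 with h | h
        · exact Or.inl (hinj i (by omega) j (by omega) h)
        · exact Or.inr (hinj i (by omega) (j + 1) (by omega) (Finset.mem_singleton.mp h))
      have c2 : i + 1 = j ∨ i + 1 = j + 1 := by
        rcases Finset.mem_insert.mp m2 with h | h
        · exact Or.inl (hinj (i + 1) (by omega) j (by omega) h)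
        · exact Or.inr (hinj (i + 1) (by omega) (j + 1) (by omega) (Finset.mem_singleton.mp h))
      omega
    · exfalso
      have hjeq : j = m := by omega
      rw [hcclt i him, hjeq, hccm] at heq
      exact hnew i him heq.symm
    · exfalso
      have hieq : i = m := by omega
      rw [hcclt j hjm, hieq, hccm] at heq
      exact hnew j hjm heq
    · omega
  have hmemcc : ∀ k ≤ m, cc k ∈ C := fun k hk =>
    Finset.mem_image.mpr ⟨k, Finset.mem_range.mpr (by omega), rfl⟩
  have hnodes : ∀ w ∈ G.nodesOf C, ∃ k ≤ m, w = vv k := by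
    intro w hwmem
    obtain ⟨f, hf, hwf⟩ := Finset.mem_biUnion.mp hwmem
    obtain ⟨i, hi, rfl⟩ := Finset.mem_image.mp hf
    have him : i ≤ m := by have := Finset.mem_range.mp hi; omega
    by_cases h : i < m
    · rw [hends1 i h] at hwf
      rcases Finset.mem_insert.mp hwf with rfl | hwf
      · exact ⟨i, by omega, rfl⟩
      · exact ⟨i + 1, by omega, Finset.mem_singleton.mp hwf⟩
    · have hieq : i = m := by omega
      rw [hieq, hends2] at hwf
      rcases Finset.mem_insert.mp hwf with rfl | hwf
      · exact ⟨0, by omega, rfl⟩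
      · exact ⟨m, le_rfl, Finset.mem_singleton.mp hwf⟩
  refine ⟨C, ⟨⟨e, (hmemC e).mpr (Or.inl rfl)⟩, ?_, ?_, ?_⟩, hmemC⟩
  · -- all links
    intro f hf
    obtain ⟨i, hi, rfl⟩ := Finset.mem_image.mp hf
    have him : i ≤ m := by have := Finset.mem_range.mp hi; omega
    by_cases h : i < m
    · rw [IsLink, hends1 i h, Finset.card_pair (hw i h).2.2]
    · have hieq : i = m := by omega
      rw [IsLink, hieq, hends2, Finset.card_pair hvne]
  · -- connectivity of edges
    intro f hf g hg
    have hsymm : Symmetric (fun a b => a ∈ (↑C : Set E) ∧ b ∈ (↑C : Set E) ∧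
        ∃ v : N, v ∈ G.ends a ∧ v ∈ G.ends b) := by
      rintro a b ⟨h1, h2, v, hv1, hv2⟩
      exact ⟨h2, h1, v, hv2, hv1⟩
    have hchain : ∀ k ≤ m, Relation.ReflTransGen (fun a b => a ∈ (↑C : Set E) ∧
        b ∈ (↑C : Set E) ∧ ∃ v : N, v ∈ G.ends a ∧ v ∈ G.ends b) (cc 0) (cc k) := by
      intro k hk
      induction k with
      | zero => exact Relation.ReflTransGen.refl
      | succ k ihk =>
        refine (ihk (by omega)).tail ⟨Finset.mem_coe.mpr (hmemcc k (by omega)),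
          Finset.mem_coe.mpr (hmemcc (k + 1) hk), vv (k + 1), ?_, ?_⟩
        · rw [hends1 k (by omega)]
          exact Finset.mem_insert_of_mem (Finset.mem_singleton_self _)
        · by_cases h : k + 1 < m
          · rw [hends1 (k + 1) h]
            exact Finset.mem_insert_self _ _
          · have hkeq : k + 1 = m := by omega
            rw [hkeq, hends2]
            exact hkeq ▸ Finset.mem_insert_of_mem (Finset.mem_singleton_self _)
    obtain ⟨i, hi, rfl⟩ := Finset.mem_image.mp hf
    obtain ⟨j, hj, rfl⟩ := Finset.mem_image.mp hg
    have him : i ≤ m := by have := Finset.mem_range.mp hi; omega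
    have hjm : j ≤ m := by have := Finset.mem_range.mp hj; omega
    exact Relation.ReflTransGen.trans
      ((@Relation.ReflTransGen.stdSymm _ _ ⟨fun _ _ h => hsymm h⟩).symm _ _ (hchain i him)) (hchain j hjm)
  · -- degrees
    intro w hwmem
    obtain ⟨k, hk, rfl⟩ := hnodes w hwmem
    have hfilter : C.filter (fun f => vv k ∈ G.ends f) =
        ((Finset.range (m + 1)).filter (fun i => vv k ∈ G.ends (cc i))).image cc := by
      ext f
      simp only [Finset.mem_filter, Finset.mem_image, Finset.mem_range, hC]
      constructor
      · rintro ⟨⟨i, hi, rfl⟩, h2⟩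
        exact ⟨i, ⟨hi, h2⟩, rfl⟩
      · rintro ⟨i, ⟨hi, h2⟩, rfl⟩
        exact ⟨⟨i, hi, rfl⟩, h2⟩
    have hmemidx : ∀ i ≤ m, (vv k ∈ G.ends (cc i)) ↔
        ((i < m ∧ (k = i ∨ k = i + 1)) ∨ (i = m ∧ (k = 0 ∨ k = m))) := by
      intro i hi
      by_cases h : i < m
      · rw [hends1 i h]
        simp only [Finset.mem_insert, Finset.mem_singleton]
        constructor
        · rintro (h' | h')
          · exact Or.inl ⟨h, Or.inl (hinj k hk i (by omega) h')⟩
          · exact Or.inl ⟨h, Or.inr (hinj k hk (i + 1) (by omega) h')⟩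
        · rintro (⟨-, h' | h'⟩ | ⟨h', -⟩)
          · exact Or.inl (by rw [h'])
          · exact Or.inr (by rw [h'])
          · omega
      · have hieq : i = m := by omega
        subst hieq
        rw [hends2]
        simp only [Finset.mem_insert, Finset.mem_singleton]
        constructor
        · rintro (h' | h')
          · exact Or.inr ⟨by simp, Or.inl (hinj k hk 0 (by omega) h')⟩
          · exact Or.inr ⟨by simp, Or.inr (hinj k hk i le_rfl h')⟩
        · rintro (⟨h', -⟩ | ⟨-, h' | h'⟩)
          · omega
          · exact Or.inl (by rw [h'])
          · exact Or.inr (by rw [h'])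
    have hidxset : (Finset.range (m + 1)).filter (fun i => vv k ∈ G.ends (cc i)) =
        if k = 0 then ({0, m} : Finset ℕ) else {k - 1, k} := by
      ext i
      simp only [Finset.mem_filter, Finset.mem_range]
      constructor
      · rintro ⟨hi, h2⟩
        have harith := (hmemidx i (by omega)).mp h2
        by_cases hk0 : k = 0
        · rw [if_pos hk0]
          simp only [Finset.mem_insert, Finset.mem_singleton]
          omega
        · rw [if_neg hk0]
          simp only [Finset.mem_insert, Finset.mem_singleton]
          omega
      · intro h'
        by_cases hk0 : k = 0
        · rw [if_pos hk0] at h'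
          simp only [Finset.mem_insert, Finset.mem_singleton] at h'
          refine ⟨by omega, ?_⟩
          rw [hmemidx i (by omega)]
          omega
        · rw [if_neg hk0] at h'
          simp only [Finset.mem_insert, Finset.mem_singleton] at h'
          refine ⟨by omega, ?_⟩
          rw [hmemidx i (by omega)]
          omega
    rw [degreeIn, hfilter, Finset.card_image_of_injOn, hidxset]
    · by_cases hk0 : k = 0
      · rw [if_pos hk0, Finset.card_pair (by omega)]
      · rw [if_neg hk0, Finset.card_pair (by omega)]
    · intro i hi j hj heq
      have hi' := Finset.mem_range.mp (Finset.mem_filter.mp hi).1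
      have hj' := Finset.mem_range.mp (Finset.mem_filter.mp hj).1
      exact hccinj i (by omega) j (by omega) heq

end MGraph
namespace MGraph

variable {N E : Type*} (G : MGraph N E)

lemma WalkN.reverse {S : Set E} {u v : N} {m : ℕ} (h : G.WalkN S u v m) :
    G.WalkN S v u m := by
  induction h with
  | refl u => exact WalkN.refl u
  | @head a b c m' e he hends hne h ih =>
    have h2 : G.ends e = {b, a} := by rwa [Finset.pair_comm] at hends
    exact WalkN.tailEdge G ih he h2 (Ne.symm hne)

lemma WalkN.append {S : Set E} {u v w : N} {m m' : ℕ} (h1 : G.WalkN S u v m)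
    (h2 : G.WalkN S v w m') : G.WalkN S u w (m + m') := by
  induction h1 with
  | refl u => simpa using h2
  | @head a b c mm e he hends hne h ih =>
    have h3 := WalkN.head e he hends hne (ih h2)
    have harith : mm + m' + 1 = mm + 1 + m' := by omega
    rwa [harith] at h3

lemma WalkN.eq_of_zero {S : Set E} {u v : N} (h : G.WalkN S u v 0) : u = v := by
  cases h; rfl

lemma WalkN.head_inv {S : Set E} {u v : N} {m : ℕ} (h : G.WalkN S u v (m + 1)) :
    ∃ (e : E) (w : N), e ∈ S ∧ G.ends e = {u, w} ∧ u ≠ w ∧ G.WalkN S w v m := by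
  cases h with
  | head e he hends hne h' => exact ⟨e, _, he, hends, hne, h'⟩

lemma WalkN.mono {S T : Set E} (hST : S ⊆ T) {u v : N} {m : ℕ} (h : G.WalkN S u v m) :
    G.WalkN T u v m := by
  induction h with
  | refl u => exact WalkN.refl u
  | head e he hends hne h ih => exact WalkN.head e (hST he) hends hne ih

/-- Class-constant representative choice fixing a given node. -/
lemma exists_rep (S : Set E) (w : N) : ∃ rep : N → N,
    (∀ z, G.nodeConn S z (rep z)) ∧ (∀ z z', G.nodeConn S z z' → rep z = rep z') ∧
      rep w = w := by
  classical
  haveI : Nonempty N := ⟨w⟩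
  set rep : N → N := fun z => if G.nodeConn S z w then w
    else Classical.epsilon (G.nodeConn S z) with hrepdef
  have hval : ∀ z, rep z = if G.nodeConn S z w then w
      else Classical.epsilon (G.nodeConn S z) := fun z => rfl
  refine ⟨rep, fun z => ?_, fun z z' hzz => ?_, ?_⟩
  · rw [hval z]
    by_cases h : G.nodeConn S z w
    · rwa [if_pos h]
    · rw [if_neg h]
      exact Classical.epsilon_spec ⟨z, G.nodeConn_refl S z⟩
  · rw [hval z, hval z']
    by_cases h : G.nodeConn S z w
    · have hc : G.nodeConn S z' w := (G.nodeConn_symm hzz).trans h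
      rw [if_pos h, if_pos hc]
    · have h' : ¬ G.nodeConn S z' w := fun hc => h (hzz.trans hc)
      rw [if_neg h, if_neg h']
      congr 1
      funext y
      exact propext ⟨fun hy => (G.nodeConn_symm hzz).trans hy, fun hy => hzz.trans hy⟩
  · rw [hval w, if_pos (G.nodeConn_refl S w)]

/-- Class-constant representative choice fixing two non-connected nodes. -/
lemma exists_rep2 (S : Set E) (u v : N) (huv : ¬ G.nodeConn S u v) : ∃ rep : N → N,
    (∀ z, G.nodeConn S z (rep z)) ∧ (∀ z z', G.nodeConn S z z' → rep z = rep z') ∧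
      rep u = u ∧ rep v = v := by
  classical
  haveI : Nonempty N := ⟨u⟩
  set rep : N → N := fun z => if G.nodeConn S z u then u else if G.nodeConn S z v then v
    else Classical.epsilon (G.nodeConn S z) with hrepdef
  have hval : ∀ z, rep z = if G.nodeConn S z u then u else if G.nodeConn S z v then v
      else Classical.epsilon (G.nodeConn S z) := fun z => rfl
  refine ⟨rep, fun z => ?_, fun z z' hzz => ?_, ?_, ?_⟩
  · rw [hval z]
    by_cases h1 : G.nodeConn S z u
    · rwa [if_pos h1]
    · rw [if_neg h1]
      by_cases h2 : G.nodeConn S z v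
      · rwa [if_pos h2]
      · rw [if_neg h2]
        exact Classical.epsilon_spec ⟨z, G.nodeConn_refl S z⟩
  · rw [hval z, hval z']
    by_cases h1 : G.nodeConn S z u
    · have hc : G.nodeConn S z' u := (G.nodeConn_symm hzz).trans h1
      rw [if_pos h1, if_pos hc]
    · have h1' : ¬ G.nodeConn S z' u := fun hc => h1 (hzz.trans hc)
      rw [if_neg h1, if_neg h1']
      by_cases h2 : G.nodeConn S z v
      · have hc : G.nodeConn S z' v := (G.nodeConn_symm hzz).trans h2
        rw [if_pos h2, if_pos hc]
      · have h2' : ¬ G.nodeConn S z' v := fun hc => h2 (hzz.trans hc)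
        rw [if_neg h2, if_neg h2']
        congr 1
        funext y
        exact propext ⟨fun hy => (G.nodeConn_symm hzz).trans hy, fun hy => hzz.trans hy⟩
  · rw [hval u, if_pos (G.nodeConn_refl S u)]
  · rw [hval v, if_neg (fun hc => huv (G.nodeConn_symm hc)), if_pos (G.nodeConn_refl S v)]

end MGraph

/-! ## Projective helpers over an independent family -/

section NuHelpers

variable {P N : Type*} (G : ProjGeom P) (ν : N → P)

lemma nu_not_mem_span_image (hν : Function.Injective ν) (hind : G.Indep (Set.range ν))
    {A : Set N} {k : N} (hk : k ∉ A) : ν k ∉ G.span (ν '' A) := by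
  intro h
  apply hind (ν k) ⟨k, rfl⟩
  refine G.span_mono ?_ h
  rintro p ⟨z, hz, rfl⟩
  exact ⟨⟨z, rfl⟩, fun heq => hk (by rwa [hν heq] at hz)⟩

lemma third_point (hν : Function.Injective ν) {u v : N} {x : P} (huv : u ≠ v)
    (hx : x ∈ G.line (ν u) (ν v)) (hxu : x ≠ ν u) (hxv : x ≠ ν v) :
    ν u ∈ G.line x (ν v) := by
  have hl : G.line x (ν v) = G.line (ν u) (ν v) :=
    G.line_unique (ν u) (ν v) x (ν v) (hν.ne huv) hx (G.right_mem_line _ _) hxv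
  rw [hl]; exact G.left_mem_line _ _

lemma two_lines (hν : Function.Injective ν) (hind : G.Indep (Set.range ν))
    {u v w : N} {z : P} (huv : u ≠ v) (hvw : v ≠ w) (huw : u ≠ w)
    (h1 : z ∈ G.line (ν u) (ν v)) (h2 : z ∈ G.line (ν v) (ν w))
    (hz : z ∉ Set.range ν) : False := by
  have hzv : z ≠ ν v := fun h => hz (h ▸ ⟨v, rfl⟩)
  have l1 : G.line z (ν v) = G.line (ν u) (ν v) :=
    G.line_unique (ν u) (ν v) z (ν v) (hν.ne huv) h1 (G.right_mem_line _ _) hzv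
  have l2 : G.line z (ν v) = G.line (ν v) (ν w) :=
    G.line_unique (ν v) (ν w) z (ν v) (hν.ne hvw) h2 (G.left_mem_line _ _) hzv
  have hmem : ν u ∈ G.line (ν v) (ν w) := by
    rw [← l2, l1]; exact G.left_mem_line _ _
  apply nu_not_mem_span_image G ν hν hind (A := {v, w}) (k := u)
    (by simp [huv, huw])
  have hv : ν v ∈ G.span (ν '' {v, w}) := G.subset_span ⟨v, by simp, rfl⟩
  have hw : ν w ∈ G.span (ν '' {v, w}) := G.subset_span ⟨w, by simp, rfl⟩
  exact G.line_subset_span hv hw hmem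

/-- Menelaus-type lemma: a cyclically dependent chain of edge-line points inside a
cross-flat is projectively dependent. -/
lemma menelaus (hν : Function.Injective ν) (hind : G.Indep (Set.range ν)) :
    ∀ (m : ℕ) (vv : ℕ → N) (cc : ℕ → P) (t : Set P), G.crossFlat ν t →
      (∀ i ≤ m, ∀ j ≤ m, vv i = vv j → i = j) →
      (∀ i < m, cc i ∈ G.line (ν (vv i)) (ν (vv (i + 1))) ∧ cc i ∉ Set.range ν ∧ cc i ∈ t) →
      1 ≤ m → ∀ x : P, x ∈ G.line (ν (vv 0)) (ν (vv m)) → x ∉ Set.range ν → x ∈ t →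
      x ∈ G.span {p : P | ∃ i < m, p = cc i} := by
  intro m
  induction m with
  | zero => intro _ _ _ _ _ _ h1; omega
  | succ k ih =>
    intro vv cc t hflat hinj hchain hm x hx hxr hxt
    rcases Nat.eq_zero_or_pos k with rfl | hk
    · obtain ⟨hc0, hc0r, hc0t⟩ := hchain 0 (by omega)
      by_cases hxc : x = cc 0
      · have m0 : cc 0 ∈ {p : P | ∃ i < 0 + 1, p = cc i} := ⟨0, by omega, rfl⟩
        exact hxc ▸ G.subset_span m0
      · exfalso
        have h01 : vv 0 ≠ vv 1 := fun h => by have := hinj 0 (by omega) 1 (by omega) h; omega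
        have hl : G.line x (cc 0) = G.line (ν (vv 0)) (ν (vv 1)) :=
          G.line_unique _ _ x (cc 0) (hν.ne h01) hx hc0 hxc
        have hmem : ν (vv 0) ∈ G.line x (cc 0) := by rw [hl]; exact G.left_mem_line _ _
        exact hflat.2 (vv 0) (hflat.1 x hxt (cc 0) hc0t hmem)
    · obtain ⟨hc0, hc0r, hc0t⟩ := hchain 0 (by omega)
      obtain ⟨hc1, hc1r, hc1t⟩ := hchain 1 (by omega)
      have h01 : vv 0 ≠ vv 1 := fun h => by have := hinj 0 (by omega) 1 (by omega) h; omega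
      have h12 : vv 1 ≠ vv 2 := fun h => by
        have := hinj 1 (by omega) 2 (by omega) h; omega
      have h02 : vv 0 ≠ vv 2 := fun h => by
        have := hinj 0 (by omega) 2 (by omega) h; omega
      have hcc01 : cc 0 ≠ cc 1 := by
        intro h
        exact two_lines G ν hν hind h01 h12 h02 hc0 (h ▸ hc1) hc0r
      have ha : ν (vv 1) ∈ G.line (cc 0) (ν (vv 0)) :=
        third_point G ν hν (Ne.symm h01) (by rwa [G.line_symm] at hc0)
          (fun h => hc0r ⟨vv 1, h.symm⟩) (fun h => hc0r ⟨vv 0, h.symm⟩)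
      have hb : ν (vv 1) ∈ G.line (cc 1) (ν (vv 2)) :=
        third_point G ν hν h12 hc1
          (fun h => hc1r ⟨vv 1, h.symm⟩) (fun h => hc1r ⟨vv 2, h.symm⟩)
      obtain ⟨y, hy1, hy2⟩ := G.veblen (cc 0) (ν (vv 0)) (cc 1) (ν (vv 2)) (ν (vv 1))
        (fun h => hc0r (h ▸ ⟨vv 0, rfl⟩)) (fun h => hc1r (h ▸ ⟨vv 2, rfl⟩)) hcc01
        (hν.ne h02) ha hb
      have hyt : y ∈ t := hflat.1 (cc 0) hc0t (cc 1) hc1t hy1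
      have hyr : y ∉ Set.range ν := by
        rintro ⟨z, rfl⟩
        exact hflat.2 z hyt
      set vv' : ℕ → N := fun i => if i = 0 then vv 0 else vv (i + 1) with hvv'
      set cc' : ℕ → P := fun i => if i = 0 then y else cc (i + 1) with hcc'
      have hinj' : ∀ i ≤ k, ∀ j ≤ k, vv' i = vv' j → i = j := by
        intro i hi j hj heq
        by_cases hi0 : i = 0 <;> by_cases hj0 : j = 0
        · omega
        · exfalso
          rw [hvv'] at heq
          simp only [hi0, if_pos rfl, if_neg hj0] at heq
          have := hinj 0 (by omega) (j + 1) (by omega) heq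
          omega
        · exfalso
          rw [hvv'] at heq
          simp only [hj0, if_pos rfl, if_neg hi0] at heq
          have := hinj (i + 1) (by omega) 0 (by omega) heq
          omega
        · rw [hvv'] at heq
          simp only [if_neg hi0, if_neg hj0] at heq
          have := hinj (i + 1) (by omega) (j + 1) (by omega) heq
          omega
      have hchain' : ∀ i < k, cc' i ∈ G.line (ν (vv' i)) (ν (vv' (i + 1))) ∧
          cc' i ∉ Set.range ν ∧ cc' i ∈ t := by
        intro i hi
        by_cases hi0 : i = 0
        · subst hi0
          have e1 : cc' 0 = y := by simp [hcc']
          have e2 : vv' 0 = vv 0 := by simp [hvv']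
          have e3 : vv' 1 = vv 2 := by simp [hvv']
          rw [e1, e2, e3]
          exact ⟨hy2, hyr, hyt⟩
        · obtain ⟨g1, g2, g3⟩ := hchain (i + 1) (by omega)
          have e1 : cc' i = cc (i + 1) := by simp [hcc', hi0]
          have e2 : vv' i = vv (i + 1) := by simp [hvv', hi0]
          have e3 : vv' (i + 1) = vv (i + 2) := by simp [hvv']
          rw [e1, e2, e3]
          exact ⟨g1, g2, g3⟩
      have hx' : x ∈ G.line (ν (vv' 0)) (ν (vv' k)) := by
        have e1 : vv' 0 = vv 0 := by simp [hvv']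
        have hk0 : k ≠ 0 := by omega
        have e2 : vv' k = vv (k + 1) := by simp [hvv', hk0]
        rw [e1, e2]
        exact hx
      have hres := ih vv' cc' t hflat hinj' hchain' hk x hx' hxr hxt
      have hsub : {p : P | ∃ i < k, p = cc' i} ⊆
          G.span {p : P | ∃ i < k + 1, p = cc i} := by
        rintro p ⟨i, hi, rfl⟩
        by_cases hi0 : i = 0
        · subst hi0
          have e1 : cc' 0 = y := by simp [hcc']
          rw [e1]
          have m0 : cc 0 ∈ {p : P | ∃ i < k + 1, p = cc i} := ⟨0, by omega, rfl⟩
          have m1 : cc 1 ∈ {p : P | ∃ i < k + 1, p = cc i} := ⟨1, by omega, rfl⟩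
          exact G.line_subset_span (G.subset_span m0) (G.subset_span m1) hy1
        · have e1 : cc' i = cc (i + 1) := by simp [hcc', hi0]
          rw [e1]
          have mi : cc (i + 1) ∈ {p : P | ∃ i < k + 1, p = cc i} := ⟨i + 1, by omega, rfl⟩
          exact G.subset_span mi
      exact G.span_le_span hsub hres

end NuHelpers

/-! ## Lemmas on the Menelaean graph -/

section MenGraph

variable {P N : Type*} (G : ProjGeom P) (ν : N → P) (Ehat : Set P)
  (hE : ∀ x ∈ Ehat, x ∉ Set.range ν →
    ∃ pr : N × N, pr.1 ≠ pr.2 ∧ x ∈ G.line (ν pr.1) (ν pr.2))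

lemma menGraph_ends_not_range {e : ↥Ehat} (h : (e : P) ∉ Set.range ν) :
    ∃ a b : N, a ≠ b ∧ (G.menGraph ν Ehat hE).ends e = {a, b} ∧
      (e : P) ∈ G.line (ν a) (ν b) := by
  have hspec := (hE e e.2 h).choose_spec
  refine ⟨(hE e e.2 h).choose.1, (hE e e.2 h).choose.2, hspec.1, ?_, hspec.2⟩
  show (if h' : (e : P) ∈ Set.range ν then _ else _) = _
  rw [dif_neg h]

lemma menGraph_ends_range {e : ↥Ehat} (h : (e : P) ∈ Set.range ν) :
    ∃ a : N, (G.menGraph ν Ehat hE).ends e = {a} ∧ ν a = (e : P) := by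
  refine ⟨(show ∃ v : N, ν v = (e : P) from h).choose, ?_,
    (show ∃ v : N, ν v = (e : P) from h).choose_spec⟩
  show (if h' : (e : P) ∈ Set.range ν then _ else _) = _
  rw [dif_pos h]

lemma menGraph_isLink_iff {e : ↥Ehat} :
    (G.menGraph ν Ehat hE).IsLink e ↔ (e : P) ∉ Set.range ν := by
  constructor
  · intro hl h
    obtain ⟨a, ha, -⟩ := menGraph_ends_range G ν Ehat hE h
    rw [MGraph.IsLink, ha, Finset.card_singleton] at hl
    omega
  · intro h
    obtain ⟨a, b, hab, hends, -⟩ := menGraph_ends_not_range G ν Ehat hE h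
    rw [MGraph.IsLink, hends, Finset.card_pair hab]

lemma menGraph_line_of_ends {e : ↥Ehat} (h : (e : P) ∉ Set.range ν) {a b : N}
    (hab : (G.menGraph ν Ehat hE).ends e = {a, b}) (hne : a ≠ b) :
    (e : P) ∈ G.line (ν a) (ν b) := by
  obtain ⟨a', b', hab', hends', hline'⟩ := menGraph_ends_not_range G ν Ehat hE h
  rw [hends'] at hab
  have ha' : a' = a ∨ a' = b := by
    have : a' ∈ ({a, b} : Finset N) := hab ▸ Finset.mem_insert_self _ _
    simpa using this
  have hb' : b' = a ∨ b' = b := by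
    have : b' ∈ ({a, b} : Finset N) :=
      hab ▸ Finset.mem_insert_of_mem (Finset.mem_singleton_self _)
    simpa using this
  rcases ha' with rfl | rfl
  · rcases hb' with rfl | rfl
    · exact absurd rfl hab'
    · exact hline'
  · rcases hb' with rfl | rfl
    · rwa [G.line_symm]
    · exact absurd rfl hab'

end MenGraph
/-! ## The master spanning-forest lemma -/

section Master

variable {P N : Type*} [Fintype N] (G : ProjGeom P) (ν : N → P) (Ehat : Set P)
  (hE : ∀ x ∈ Ehat, x ∉ Set.range ν →
    ∃ pr : N × N, pr.1 ≠ pr.2 ∧ x ∈ G.line (ν pr.1) (ν pr.2))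

local notation "MG" => ProjGeom.menGraph G ν Ehat hE

lemma nu_image_finindep (hν : Function.Injective ν) (hind : G.Indep (Set.range ν)) :
    G.FinIndep (Finset.univ.image ν) := by
  intro b hb
  obtain ⟨z, -, rfl⟩ := Finset.mem_image.mp hb
  intro hmem
  apply hind (ν z) ⟨z, rfl⟩
  refine G.span_mono ?_ hmem
  intro p hp
  obtain ⟨hne, hpimg⟩ := Finset.mem_erase.mp (Finset.mem_coe.mp hp)
  obtain ⟨y, -, rfl⟩ := Finset.mem_image.mp hpimg
  exact ⟨⟨y, rfl⟩, hne⟩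

lemma men_master (hν : Function.Injective ν) (hind : G.Indep (Set.range ν))
    (S₀ : Finset ↥Ehat)
    (hbal : (MG).IsBalancedSet (G.menBal ν Ehat hE) (↑S₀ : Set ↥Ehat))
    (rep : N → N)
    (hrep1 : ∀ z, (MG).nodeConn (↑S₀ : Set ↥Ehat) z (rep z))
    (hrep2 : ∀ z z', (MG).nodeConn (↑S₀ : Set ↥Ehat) z z' → rep z = rep z') :
    ∃ T : Finset ↥Ehat, ↑T ⊆ (↑S₀ : Set ↥Ehat) ∧
      (∀ e ∈ S₀, ∀ u : N, u ∈ (MG).ends e →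
        (e : P) ∈ G.span (Subtype.val '' {f : ↥Ehat | f ∈ T ∧
          ∀ a ∈ (MG).ends f, (MG).nodeConn (↑S₀ : Set ↥Ehat) a u})) ∧
      (∀ z : N, ν z ∈ G.span ((Subtype.val '' {f : ↥Ehat | f ∈ T ∧
          ∀ a ∈ (MG).ends f, (MG).nodeConn (↑S₀ : Set ↥Ehat) a z}) ∪
          {ν (rep z)})) ∧
      (∀ w : N, rep w = w →
        ν w ∉ G.span ((Subtype.val '' (↑T : Set ↥Ehat)) ∪
          ν '' {z : N | rep z = z ∧ z ≠ w})) := by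
  classical
  have hlink : ∀ e ∈ (↑S₀ : Set ↥Ehat), (MG).IsLink e := hbal.1
  have hnotr : ∀ e ∈ S₀, (e : P) ∉ Set.range ν := fun e he =>
    (menGraph_isLink_iff G ν Ehat hE).mp (hlink e he)
  have hcard2 : ∀ e ∈ (↑S₀ : Set ↥Ehat), ((MG).ends e).card = 2 := hlink
  -- the ends of an edge of S₀ are connected to each other
  have hadj : ∀ e ∈ S₀, ∀ a ∈ (MG).ends e, ∀ b ∈ (MG).ends e,
      (MG).nodeConn (↑S₀ : Set ↥Ehat) a b := fun e he a ha b hb =>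
    (MG).nodeConn_of_adj ⟨e, he, ha, hb⟩
  by_cases hD : ∀ z, rep z = z
  · -- degenerate case: S₀ must be empty
    have hS0 : S₀ = ∅ := by
      rcases Finset.eq_empty_or_nonempty S₀ with h | ⟨e, he⟩
      · exact h
      · exfalso
        obtain ⟨a, b, hab, hends, -⟩ :=
          menGraph_ends_not_range G ν Ehat hE (hnotr e he)
        have hconn : (MG).nodeConn (↑S₀ : Set ↥Ehat) a b :=
          hadj e he a (by rw [hends]; exact Finset.mem_insert_self _ _)
            b (by rw [hends]; exact Finset.mem_insert_of_mem (Finset.mem_singleton_self _))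
        have := hrep2 a b hconn
        rw [hD a, hD b] at this
        exact hab this
    subst hS0
    refine ⟨∅, by simp, ?_, ?_, ?_⟩
    · intro e he
      exact absurd he (by simp)
    · intro z
      apply G.subset_span
      right
      rw [hD z]
      rfl
    · intro w hw hmem
      apply nu_not_mem_span_image G ν hν hind
        (A := {z : N | rep z = z ∧ z ≠ w}) (k := w) (fun h => h.2 rfl)
      simpa using hmem
  · push_neg at hD
    obtain ⟨z₀, hz₀⟩ := hD
    -- distances to the representatives
    have hex : ∀ z, ∃ m, (MG).WalkN (↑S₀ : Set ↥Ehat) z (rep z) m := fun z =>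
      MGraph.exists_walkN (MG) hcard2 (hrep1 z)
    have hstep : ∀ z, rep z ≠ z → ∃ ew : ↥Ehat × N, ew.1 ∈ S₀ ∧
        (MG).ends ew.1 = {z, ew.2} ∧ z ≠ ew.2 ∧
        Nat.find (hex ew.2) < Nat.find (hex z) := by
      intro z hz
      have hspec := Nat.find_spec (hex z)
      have hpos : 1 ≤ Nat.find (hex z) := by
        by_contra h
        have h0 : Nat.find (hex z) = 0 := by omega
        rw [h0] at hspec
        exact hz (MGraph.WalkN.eq_of_zero (MG) hspec).symm
      have hn : Nat.find (hex z) = (Nat.find (hex z) - 1) + 1 := by omega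
      rw [hn] at hspec
      obtain ⟨e, w, he, hends, hne, hwalk⟩ := MGraph.WalkN.head_inv (MG) hspec
      have hconnzw : (MG).nodeConn (↑S₀ : Set ↥Ehat) z w :=
        hadj e he z (by rw [hends]; exact Finset.mem_insert_self _ _)
          w (by rw [hends]; exact Finset.mem_insert_of_mem (Finset.mem_singleton_self _))
      have hreq : rep w = rep z := (hrep2 z w hconnzw).symm
      have hwalk' : (MG).WalkN (↑S₀ : Set ↥Ehat) w (rep w) (Nat.find (hex z) - 1) := by
        rwa [hreq]
      have hle := Nat.find_min' (hex w) hwalk'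
      exact ⟨(e, w), he, hends, hne, by omega⟩
    have hEne : Nonempty (↥Ehat × N) := ⟨(hstep z₀ hz₀).choose⟩
    set pe : N → ↥Ehat × N := fun z =>
      if h : rep z ≠ z then (hstep z h).choose else Classical.arbitrary _ with hpedef
    have hpe : ∀ z (h : rep z ≠ z), (pe z).1 ∈ S₀ ∧
        (MG).ends (pe z).1 = {z, (pe z).2} ∧ z ≠ (pe z).2 ∧
        Nat.find (hex (pe z).2) < Nat.find (hex z) := by
      intro z h
      have : pe z = (hstep z h).choose := dif_pos h
      rw [this]
      exact (hstep z h).choose_spec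
    set D : Finset N := Finset.univ.filter (fun z => rep z ≠ z) with hDdef
    set T : Finset ↥Ehat := D.image (fun z => (pe z).1) with hTdef
    have hmemD : ∀ z, z ∈ D ↔ rep z ≠ z := by
      intro z; rw [hDdef]; simp
    have hTsub : (↑T : Set ↥Ehat) ⊆ (↑S₀ : Set ↥Ehat) := by
      intro f hf
      obtain ⟨z, hz, rfl⟩ := Finset.mem_image.mp (Finset.mem_coe.mp hf)
      exact Finset.mem_coe.mpr ((hpe z ((hmemD z).mp hz)).1)
    have hpeinj : Set.InjOn (fun z => (pe z).1) ↑D := by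
      intro z hz z' hz' heq
      by_contra hne
      have h1 := hpe z ((hmemD z).mp (Finset.mem_coe.mp hz))
      have h2 := hpe z' ((hmemD z').mp (Finset.mem_coe.mp hz'))
      have hends : ({z, (pe z).2} : Finset N) = {z', (pe z').2} := by
        rw [← h1.2.1, ← h2.2.1]
        simp only at heq
        rw [heq]
      have hz1 : z = z' ∨ z = (pe z').2 := by
        have h' : z ∈ ({z, (pe z).2} : Finset N) := Finset.mem_insert_self _ _
        rw [hends] at h'
        simpa using h'
      have hz2 : z' = z ∨ z' = (pe z).2 := by
        have h' : z' ∈ ({z', (pe z').2} : Finset N) := Finset.mem_insert_self _ _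
        rw [← hends] at h'
        simpa using h' 
      rcases hz1 with h | h
      · exact hne h
      rcases hz2 with h' | h'
      · exact hne h'.symm
      have d1 := h1.2.2.2
      have d2 := h2.2.2.2
      rw [← h'] at d1
      rw [← h] at d2
      omega
    have hTcard : T.card = D.card := Finset.card_image_of_injOn hpeinj
    -- membership of parent edges in T
    have hpeT : ∀ z, rep z ≠ z → (pe z).1 ∈ T := by
      intro z h
      rw [hTdef]
      exact Finset.mem_image.mpr ⟨z, (hmemD z).mpr h, rfl⟩
    -- the class-local forests
    have hTsetcong : ∀ z z', (MG).nodeConn (↑S₀ : Set ↥Ehat) z z' →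
        {f : ↥Ehat | f ∈ T ∧ ∀ a ∈ (MG).ends f, (MG).nodeConn (↑S₀ : Set ↥Ehat) a z} =
        {f : ↥Ehat | f ∈ T ∧ ∀ a ∈ (MG).ends f, (MG).nodeConn (↑S₀ : Set ↥Ehat) a z'} := by
      intro z z' hzz
      ext f
      constructor
      · rintro ⟨h1, h2⟩
        exact ⟨h1, fun a ha => (h2 a ha).trans hzz⟩
      · rintro ⟨h1, h2⟩
        exact ⟨h1, fun a ha => (h2 a ha).trans ((MG).nodeConn_symm hzz)⟩
    -- (c4)
    have hc4 : ∀ n, ∀ z, Nat.find (hex z) ≤ n →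
        ν z ∈ G.span ((Subtype.val '' {f : ↥Ehat | f ∈ T ∧
          ∀ a ∈ (MG).ends f, (MG).nodeConn (↑S₀ : Set ↥Ehat) a z}) ∪ {ν (rep z)}) := by
      intro n
      induction n with
      | zero =>
        intro z hn
        have h0 : Nat.find (hex z) = 0 := by omega
        have hspec := Nat.find_spec (hex z)
        rw [h0] at hspec
        have hzr : z = rep z := MGraph.WalkN.eq_of_zero (MG) hspec
        apply G.subset_span
        right
        rw [← hzr]
        rfl
      | succ n ih =>
        intro z hn
        by_cases hz : rep z = z
        · apply G.subset_span
          right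
          rw [hz]
          rfl
        · obtain ⟨he, hends, hzw, hfind⟩ := hpe z hz
          have hz1m : z ∈ (MG).ends (pe z).1 := by
            rw [hends]; exact Finset.mem_insert_self _ _
          have hz2m : (pe z).2 ∈ (MG).ends (pe z).1 := by
            rw [hends]; exact Finset.mem_insert_of_mem (Finset.mem_singleton_self _)
          have hconnzw : (MG).nodeConn (↑S₀ : Set ↥Ehat) z (pe z).2 :=
            hadj (pe z).1 he z hz1m (pe z).2 hz2m
          have hreq : rep (pe z).2 = rep z := (hrep2 z (pe z).2 hconnzw).symm
          have hihw := ih (pe z).2 (by omega)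
          have heline : ((pe z).1 : P) ∈ G.line (ν z) (ν (pe z).2) :=
            menGraph_line_of_ends G ν Ehat hE (hnotr (pe z).1 he) hends hzw
          have hnz : ν z ∈ G.line ((pe z).1 : P) (ν (pe z).2) :=
            third_point G ν hν hzw heline
              (fun h => hnotr (pe z).1 he ⟨z, h.symm⟩)
              (fun h => hnotr (pe z).1 he ⟨(pe z).2, h.symm⟩)
          have hTz : ((pe z).1 : P) ∈ (Subtype.val '' {f : ↥Ehat | f ∈ T ∧
              ∀ a ∈ (MG).ends f, (MG).nodeConn (↑S₀ : Set ↥Ehat) a z}) ∪ {ν (rep z)} := by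
            left
            refine ⟨(pe z).1, ⟨hpeT z hz, ?_⟩, rfl⟩
            intro a ha
            rw [hends] at ha
            rcases Finset.mem_insert.mp ha with rfl | ha
            · exact (MG).nodeConn_refl _ _
            · rw [Finset.mem_singleton.mp ha]
              exact (MG).nodeConn_symm hconnzw
          have hwmem : ν (pe z).2 ∈ G.span ((Subtype.val '' {f : ↥Ehat | f ∈ T ∧
              ∀ a ∈ (MG).ends f, (MG).nodeConn (↑S₀ : Set ↥Ehat) a z}) ∪ {ν (rep z)}) := by
            rwa [hTsetcong (pe z).2 z ((MG).nodeConn_symm hconnzw), hreq] at hihw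
          exact G.line_subset_span (G.subset_span hTz) hwmem hnz
    have hc4' : ∀ z, ν z ∈ G.span ((Subtype.val '' {f : ↥Ehat | f ∈ T ∧
        ∀ a ∈ (MG).ends f, (MG).nodeConn (↑S₀ : Set ↥Ehat) a z}) ∪ {ν (rep z)}) :=
      fun z => hc4 (Nat.find (hex z)) z le_rfl
    -- walks within the class-local forest
    have hwalkT : ∀ n, ∀ z, Nat.find (hex z) ≤ n → ∃ m, (MG).WalkN
        {f : ↥Ehat | f ∈ T ∧ ∀ a ∈ (MG).ends f, (MG).nodeConn (↑S₀ : Set ↥Ehat) a z}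
        z (rep z) m := by
      intro n
      induction n with
      | zero =>
        intro z hn
        have h0 : Nat.find (hex z) = 0 := by omega
        have hspec := Nat.find_spec (hex z)
        rw [h0] at hspec
        have hzr : z = rep z := MGraph.WalkN.eq_of_zero (MG) hspec
        refine ⟨0, ?_⟩
        rw [← hzr]
        exact MGraph.WalkN.refl z
      | succ n ih =>
        intro z hn
        by_cases hz : rep z = z
        · refine ⟨0, ?_⟩
          rw [hz]
          exact MGraph.WalkN.refl z
        · obtain ⟨he, hends, hzw, hfind⟩ := hpe z hz
          have hz1m : z ∈ (MG).ends (pe z).1 := by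
            rw [hends]; exact Finset.mem_insert_self _ _
          have hz2m : (pe z).2 ∈ (MG).ends (pe z).1 := by
            rw [hends]; exact Finset.mem_insert_of_mem (Finset.mem_singleton_self _)
          have hconnzw : (MG).nodeConn (↑S₀ : Set ↥Ehat) z (pe z).2 :=
            hadj (pe z).1 he z hz1m (pe z).2 hz2m
          have hreq : rep (pe z).2 = rep z := (hrep2 z (pe z).2 hconnzw).symm
          obtain ⟨m, hwk⟩ := ih (pe z).2 (by omega)
          rw [hTsetcong (pe z).2 z ((MG).nodeConn_symm hconnzw), hreq] at hwk
          have hmemE : (pe z).1 ∈ {f : ↥Ehat | f ∈ T ∧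
              ∀ a ∈ (MG).ends f, (MG).nodeConn (↑S₀ : Set ↥Ehat) a z} := by
            refine ⟨hpeT z hz, ?_⟩
            intro a ha
            rw [hends] at ha
            rcases Finset.mem_insert.mp ha with rfl | ha
            · exact (MG).nodeConn_refl _ _
            · rw [Finset.mem_singleton.mp ha]
              exact (MG).nodeConn_symm hconnzw
          exact ⟨m + 1, MGraph.WalkN.head (pe z).1 hmemE hends hzw hwk⟩
    refine ⟨T, hTsub, ?_, hc4', ?_⟩
    · -- (c3)
      intro e he u hu
      obtain ⟨a, b, hab, hends, hline⟩ :=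
        menGraph_ends_not_range G ν Ehat hE (hnotr e he)
      have hconnends : ∀ a' ∈ (MG).ends e, (MG).nodeConn (↑S₀ : Set ↥Ehat) a' u :=
        fun a' ha' => hadj e he a' ha' u hu
      have hamem : a ∈ (MG).ends e := by
        rw [hends]; exact Finset.mem_insert_self _ _
      have hbmem : b ∈ (MG).ends e := by
        rw [hends]; exact Finset.mem_insert_of_mem (Finset.mem_singleton_self _)
      by_cases heT : e ∈ T
      · exact G.subset_span (Set.mem_image_of_mem _ ⟨heT, hconnends⟩)
      · -- build a circle through e using the forest
        obtain ⟨m₁, hw1⟩ := hwalkT (Nat.find (hex a)) a le_rfl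
        obtain ⟨m₂, hw2⟩ := hwalkT (Nat.find (hex b)) b le_rfl
        have hconnab : (MG).nodeConn (↑S₀ : Set ↥Ehat) a b := hadj e he a hamem b hbmem
        have hrab : rep a = rep b := hrep2 a b hconnab
        have hconnau : (MG).nodeConn (↑S₀ : Set ↥Ehat) a u := hconnends a hamem
        have hconnbu : (MG).nodeConn (↑S₀ : Set ↥Ehat) b u := hconnends b hbmem
        rw [hTsetcong a u hconnau] at hw1
        rw [hTsetcong b u hconnbu, ← hrab] at hw2
        have hwab := MGraph.WalkN.append (MG) hw1 (MGraph.WalkN.reverse (MG) hw2)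
        have hm1 : 1 ≤ m₁ + m₂ := by
          by_contra h
          have h0 : m₁ + m₂ = 0 := by omega
          rw [h0] at hwab
          exact hab (MGraph.WalkN.eq_of_zero (MG) hwab)
        obtain ⟨vv, ee, hwfun, h0, hmend⟩ := MGraph.WalkN.toIsWalk (MG) hwab hm1
        obtain ⟨m', vv', ee', hw', h0', hm', hinj'⟩ :=
          MGraph.exists_path (MG) hwfun h0 hmend
        have hm'1 : 1 ≤ m' := by
          by_contra h
          have h0'' : m' = 0 := by omega
          apply hab
          rw [← h0', ← hm', h0'']
        have hendse : (MG).ends e = {vv' 0, vv' m'} := by rw [h0', hm']; exact hends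
        have hnew : ∀ i < m', e ≠ ee' i := by
          intro i hi heq
          exact heT (heq ▸ (hw' i hi).1.1)
        obtain ⟨C, hcirc, hmemC⟩ := MGraph.circle_of_path (MG) hw' hinj' hm'1 hendse hnew
        have hCsub : ↑C ⊆ (↑S₀ : Set ↥Ehat) := by
          intro f hf
          rcases (hmemC f).mp (Finset.mem_coe.mp hf) with rfl | ⟨i, hi, rfl⟩
          · exact Finset.mem_coe.mpr he
          · exact hTsub (Finset.mem_coe.mpr ((hw' i hi).1.1))
        obtain ⟨-, t, hcross, hpts⟩ := hbal.2 C hCsub hcirc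
        have hchain : ∀ i < m', (ee' i : P) ∈ G.line (ν (vv' i)) (ν (vv' (i + 1))) ∧
            ((ee' i : P) ∉ Set.range ν) ∧ (ee' i : P) ∈ t := by
          intro i hi
          obtain ⟨hfmem, hfe, hfne⟩ := hw' i hi
          have hfS : ee' i ∈ S₀ := Finset.mem_coe.mp (hTsub (Finset.mem_coe.mpr hfmem.1))
          refine ⟨menGraph_line_of_ends G ν Ehat hE (hnotr _ hfS) hfe hfne,
            hnotr _ hfS, hpts _ ((hmemC _).mpr (Or.inr ⟨i, hi, rfl⟩))⟩
        have hxline : (e : P) ∈ G.line (ν (vv' 0)) (ν (vv' m')) := by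
          rw [h0', hm']
          exact hline
        have hmen := menelaus G ν hν hind m' vv' (fun i => (ee' i : P)) t hcross hinj'
          hchain hm'1 (e : P) hxline (hnotr e he)
          (hpts e ((hmemC e).mpr (Or.inl rfl)))
        refine G.span_le_span ?_ hmen
        rintro p ⟨i, hi, rfl⟩
        have hmemf : ee' i ∈ {f : ↥Ehat | f ∈ T ∧ ∀ a ∈ (MG).ends f,
            (MG).nodeConn (↑S₀ : Set ↥Ehat) a u} := ⟨(hw' i hi).1.1, (hw' i hi).1.2⟩
        exact G.subset_span (Set.mem_image_of_mem Subtype.val hmemf)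
    · -- (c6)
      intro w hw hmem
      set R : Finset N := Finset.univ.filter (fun z => rep z = z) with hRdef
      set B' : Finset P := T.image Subtype.val ∪ (R.erase w).image ν with hB'def
      have hwR : w ∈ R := by rw [hRdef]; simp [hw]
      have hsubB' : (Subtype.val '' (↑T : Set ↥Ehat)) ∪
          ν '' {z : N | rep z = z ∧ z ≠ w} ⊆ ↑B' := by
        rintro p (⟨f, hf, rfl⟩ | ⟨z, ⟨hz1, hz2⟩, rfl⟩)
        · have hmemB : (f : P) ∈ B' := by
            rw [hB'def]
            apply Finset.mem_union_left
            exact Finset.mem_image.mpr ⟨f, Finset.mem_coe.mp hf, rfl⟩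
          exact Finset.mem_coe.mpr hmemB
        · have hzR : z ∈ R.erase w := by
            refine Finset.mem_erase.mpr ⟨hz2, ?_⟩
            rw [hRdef]
            simp [hz1]
          have hmemB : ν z ∈ B' := by
            rw [hB'def]
            apply Finset.mem_union_right
            exact Finset.mem_image.mpr ⟨z, hzR, rfl⟩
          exact Finset.mem_coe.mpr hmemB
      have hmem' : ν w ∈ G.span ↑B' :=
        G.span_le_span (fun p hp => G.subset_span (hsubB' hp)) hmem
      have hall : ∀ z : N, ν z ∈ G.span ↑B' := by
        intro z
        refine G.span_le_span ?_ (hc4' z)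
        rintro p (⟨f, hf, rfl⟩ | hp)
        · apply G.subset_span
          apply hsubB'
          exact Or.inl (Set.mem_image_of_mem _ (Finset.mem_coe.mpr hf.1))
        · have hprz : p = ν (rep z) := hp
          rw [hprz]
          by_cases hrw : rep z = w
          · rw [hrw]; exact hmem'
          · apply G.subset_span
            apply hsubB'
            right
            refine ⟨rep z, ⟨?_, hrw⟩, rfl⟩
            exact hrep2 (rep z) z ((MG).nodeConn_symm (hrep1 z))
      -- Steinitz contradiction
      have hIindep : G.FinIndep (Finset.univ.image ν) := nu_image_finindep G ν hν hind
      have hIsub : ↑(Finset.univ.image ν) ⊆ G.span (↑B' : Set P) := by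
        intro p hp
        obtain ⟨z, -, rfl⟩ := Finset.mem_image.mp (Finset.mem_coe.mp hp)
        exact hall z
      have hsteinitz := G.steinitz hIindep hIsub
      have hIcard : (Finset.univ.image ν).card = Fintype.card N := by
        rw [Finset.card_image_of_injective _ hν, Finset.card_univ]
      have hDR : D.card + R.card = Fintype.card N := by
        rw [hDdef, hRdef]
        have h := Finset.card_filter_add_card_filter_not
          (s := (Finset.univ : Finset N)) (p := fun z => rep z = z)
        rw [Finset.card_univ] at h
        have hne : (Finset.filter (fun z => rep z ≠ z) Finset.univ) =
            (Finset.filter (fun z => ¬ rep z = z) Finset.univ) := rfl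
        rw [hne]
        omega
      have hB'card : B'.card ≤ D.card + (R.card - 1) := by
        rw [hB'def]
        calc (T.image Subtype.val ∪ (R.erase w).image ν).card ≤
            (T.image Subtype.val).card + ((R.erase w).image ν).card :=
              Finset.card_union_le _ _
          _ ≤ T.card + (R.erase w).card := by
              gcongr <;> exact Finset.card_image_le
          _ = D.card + (R.card - 1) := by
              rw [hTcard, Finset.card_erase_of_mem hwR]
      have hR1 : 1 ≤ R.card := Finset.card_pos.mpr ⟨w, hwR⟩
      omega

end Master
/-! ## The key geometric lemma for balanced edge sets -/

section Key

variable {P N : Type*} [Fintype N] (G : ProjGeom P) (ν : N → P) (Ehat : Set P)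
  (hE : ∀ x ∈ Ehat, x ∉ Set.range ν →
    ∃ pr : N × N, pr.1 ≠ pr.2 ∧ x ∈ G.line (ν pr.1) (ν pr.2))

local notation "MG" => ProjGeom.menGraph G ν Ehat hE

lemma men_S0_sub_spanT (S₀ : Finset ↥Ehat)
    (hbal : (MG).IsBalancedSet (G.menBal ν Ehat hE) (↑S₀ : Set ↥Ehat))
    (T : Finset ↥Ehat)
    (hc3 : ∀ e ∈ S₀, ∀ u : N, u ∈ (MG).ends e →
      (e : P) ∈ G.span (Subtype.val '' {f : ↥Ehat | f ∈ T ∧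
        ∀ a ∈ (MG).ends f, (MG).nodeConn (↑S₀ : Set ↥Ehat) a u})) :
    Subtype.val '' (↑S₀ : Set ↥Ehat) ⊆ G.span (Subtype.val '' (↑T : Set ↥Ehat)) := by
  rintro p ⟨e, he, rfl⟩
  have heS : e ∈ S₀ := Finset.mem_coe.mp he
  have hnotr : (e : P) ∉ Set.range ν :=
    (menGraph_isLink_iff G ν Ehat hE).mp (hbal.1 e he)
  obtain ⟨a, b, hab, hends, -⟩ := menGraph_ends_not_range G ν Ehat hE hnotr
  have hmema : a ∈ (MG).ends e := by
    rw [hends]; exact Finset.mem_insert_self _ _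
  refine G.span_le_span ?_ (hc3 e heS a hmema)
  rintro q ⟨f, hf, rfl⟩
  exact G.subset_span ⟨f, Finset.mem_coe.mpr hf.1, rfl⟩

lemma men_key (hν : Function.Injective ν) (hind : G.Indep (Set.range ν))
    (S₀ : Finset ↥Ehat)
    (hbal : (MG).IsBalancedSet (G.menBal ν Ehat hE) (↑S₀ : Set ↥Ehat)) :
    (∀ w : N, ν w ∉ G.span (Subtype.val '' (↑S₀ : Set ↥Ehat))) ∧
    (∀ u v : N, u ≠ v → ∀ x : P, x ∈ G.line (ν u) (ν v) → x ∉ Set.range ν →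
      x ∈ G.span (Subtype.val '' (↑S₀ : Set ↥Ehat)) →
      (MG).nodeConn (↑S₀ : Set ↥Ehat) u v ∧
        x ∈ G.span (Subtype.val '' {f : ↥Ehat | f ∈ S₀ ∧
          ∀ a ∈ (MG).ends f, (MG).nodeConn (↑S₀ : Set ↥Ehat) a u})) := by
  constructor
  · intro w hmem
    obtain ⟨rep, hrep1, hrep2, hrepw⟩ := (MG).exists_rep (↑S₀ : Set ↥Ehat) w
    obtain ⟨T, hTsub, hc3, hc4, hc6⟩ :=
      men_master G ν Ehat hE hν hind S₀ hbal rep hrep1 hrep2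
    apply hc6 w hrepw
    have h1 : ν w ∈ G.span (Subtype.val '' (↑T : Set ↥Ehat)) :=
      G.span_le_span (men_S0_sub_spanT G ν Ehat hE S₀ hbal T hc3) hmem
    exact G.span_mono Set.subset_union_left h1
  · intro u v huv x hxline hxr hxspan
    have hconn : (MG).nodeConn (↑S₀ : Set ↥Ehat) u v := by
      by_contra hnc
      obtain ⟨rep, hrep1, hrep2, hru, hrv⟩ :=
        (MG).exists_rep2 (↑S₀ : Set ↥Ehat) u v hnc
      obtain ⟨T, hTsub, hc3, hc4, hc6⟩ :=
        men_master G ν Ehat hE hν hind S₀ hbal rep hrep1 hrep2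
      apply hc6 u hru
      have hxT : x ∈ G.span (Subtype.val '' (↑T : Set ↥Ehat)) :=
        G.span_le_span (men_S0_sub_spanT G ν Ehat hE S₀ hbal T hc3) hxspan
      have hnu : ν u ∈ G.line x (ν v) :=
        third_point G ν hν huv hxline (fun h => hxr (h ▸ ⟨u, rfl⟩))
          (fun h => hxr (h ▸ ⟨v, rfl⟩))
      have hvmem : ν v ∈ G.span ((Subtype.val '' (↑T : Set ↥Ehat)) ∪
          ν '' {z : N | rep z = z ∧ z ≠ u}) := by
        apply G.subset_span
        exact Or.inr ⟨v, ⟨hrv, Ne.symm huv⟩, rfl⟩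
      have hxmem : x ∈ G.span ((Subtype.val '' (↑T : Set ↥Ehat)) ∪
          ν '' {z : N | rep z = z ∧ z ≠ u}) :=
        G.span_le_span (fun p hp => G.span_mono Set.subset_union_left
          (G.subset_span hp)) hxT
      exact G.line_subset_span hxmem hvmem hnu
    refine ⟨hconn, ?_⟩
    obtain ⟨rep, hrep1, hrep2, hru⟩ := (MG).exists_rep (↑S₀ : Set ↥Ehat) u
    obtain ⟨T, hTsub, hc3, hc4, hc6⟩ :=
      men_master G ν Ehat hE hν hind S₀ hbal rep hrep1 hrep2
    have hxT : x ∈ G.span (Subtype.val '' (↑T : Set ↥Ehat)) :=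
      G.span_le_span (men_S0_sub_spanT G ν Ehat hE S₀ hbal T hc3) hxspan
    have hTsetcong : {f : ↥Ehat | f ∈ T ∧ ∀ a ∈ (MG).ends f,
        (MG).nodeConn (↑S₀ : Set ↥Ehat) a v} = {f : ↥Ehat | f ∈ T ∧
        ∀ a ∈ (MG).ends f, (MG).nodeConn (↑S₀ : Set ↥Ehat) a u} := by
      ext f
      constructor
      · rintro ⟨h1, h2⟩
        exact ⟨h1, fun a ha => (h2 a ha).trans ((MG).nodeConn_symm hconn)⟩
      · rintro ⟨h1, h2⟩
        exact ⟨h1, fun a ha => (h2 a ha).trans hconn⟩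
    have hrv : rep v = u := by
      rw [← (hrep2 u v hconn)]
      exact hru
    have hvmem : ν v ∈ G.span ((Subtype.val '' {f : ↥Ehat | f ∈ T ∧
        ∀ a ∈ (MG).ends f, (MG).nodeConn (↑S₀ : Set ↥Ehat) a u}) ∪ {ν u}) := by
      have := hc4 v
      rwa [hTsetcong, hrv] at this
    have humem : ν u ∈ G.span ((Subtype.val '' {f : ↥Ehat | f ∈ T ∧
        ∀ a ∈ (MG).ends f, (MG).nodeConn (↑S₀ : Set ↥Ehat) a u}) ∪ {ν u}) :=
      G.subset_span (Or.inr rfl)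
    have hxcone : x ∈ G.span ((Subtype.val '' {f : ↥Ehat | f ∈ T ∧
        ∀ a ∈ (MG).ends f, (MG).nodeConn (↑S₀ : Set ↥Ehat) a u}) ∪ {ν u}) :=
      G.line_subset_span humem hvmem hxline
    by_cases hx : x ∈ G.span (Subtype.val '' {f : ↥Ehat | f ∈ T ∧
        ∀ a ∈ (MG).ends f, (MG).nodeConn (↑S₀ : Set ↥Ehat) a u})
    · refine G.span_le_span ?_ hx
      rintro p ⟨f, hf, rfl⟩
      refine G.subset_span ⟨f, ⟨Finset.mem_coe.mp (hTsub (Finset.mem_coe.mpr hf.1)), hf.2⟩, rfl⟩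
    · exfalso
      have hxcone' : x ∈ G.span (insert (ν u) (Subtype.val '' {f : ↥Ehat | f ∈ T ∧
          ∀ a ∈ (MG).ends f, (MG).nodeConn (↑S₀ : Set ↥Ehat) a u})) := by
        rwa [Set.union_singleton] at hxcone
      have hexch := G.exchange hxcone' hx
      have hnu : ν u ∈ G.span (Subtype.val '' (↑T : Set ↥Ehat)) := by
        refine G.span_le_span ?_ hexch
        rintro p (rfl | ⟨f, hf, rfl⟩)
        · exact hxT
        · exact G.subset_span ⟨f, Finset.mem_coe.mpr hf.1, rfl⟩
      apply hc6 u hru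
      exact G.span_mono Set.subset_union_left hnu

end Key
/-! ## Counting balanced components under edge insertion -/

namespace MGraph

variable {N E : Type*} (G : MGraph N E)

lemma edgesIn_subset (S : Set E) (W : Set N) : G.edgesIn S W ⊆ S := fun _ h => h.1

lemma numBal_le_card [Fintype N] (B : Set (Finset E)) (S : Set E) :
    G.numBalComponents B S ≤ Fintype.card N := by
  rw [G.numBalComponents_eq_ncard]
  exact G.ncard_le_card_of_subset_components (fun W hW => hW.1)

lemma components_insert_of_conn {S : Set E} {e : E}
    (hconn : ∀ a ∈ G.ends e, ∀ b ∈ G.ends e, G.nodeConn S a b) :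
    G.components (insert e S) = G.components S := by
  unfold components
  rw [G.nodeConn_insert_eq hconn]

lemma edgesIn_insert_of_ne {S : Set E} {e : E} {a₀ : N} (ha₀ : a₀ ∈ G.ends e)
    {W : Set N} (hW : W ∈ G.components S) (hne : W ≠ G.compOf S a₀) :
    G.edgesIn (insert e S) W = G.edgesIn S W := by
  ext f
  constructor
  · rintro ⟨hf, hends⟩
    rcases hf with rfl | hf
    · exact absurd (G.eq_compOf_of_mem hW (hends a₀ ha₀)) hne
    · exact ⟨hf, hends⟩
  · rintro ⟨hf, hends⟩
    exact ⟨Or.inr hf, hends⟩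

lemma edgesIn_insert_self {S : Set E} {e : E} {a₀ : N} (ha₀ : a₀ ∈ G.ends e)
    (hconn : ∀ a ∈ G.ends e, ∀ b ∈ G.ends e, G.nodeConn S a b) :
    G.edgesIn (insert e S) (G.compOf S a₀) = insert e (G.edgesIn S (G.compOf S a₀)) := by
  ext f
  constructor
  · rintro ⟨hf, hends⟩
    rcases hf with rfl | hf
    · exact Set.mem_insert _ _
    · exact Set.mem_insert_of_mem _ ⟨hf, hends⟩
  · rintro (rfl | ⟨hf, hends⟩)
    · exact ⟨Set.mem_insert _ _, fun a ha => hconn a ha a₀ ha₀⟩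
    · exact ⟨Set.mem_insert_of_mem _ hf, hends⟩

/-- Inserting an edge inside one component: the effect on balanced components. -/
lemma numBal_insert_of_conn [Fintype N] (B : Set (Finset E)) (S : Set E) (e : E)
    (a₀ : N) (ha₀ : a₀ ∈ G.ends e)
    (hconn : ∀ a ∈ G.ends e, ∀ b ∈ G.ends e, G.nodeConn S a b)
    (hallbal : ∀ W ∈ G.components S, G.IsBalancedSet B (G.edgesIn S W)) :
    (G.IsBalancedSet B (G.edgesIn (insert e S) (G.compOf S a₀)) →
      G.numBalComponents B (insert e S) = G.numBalComponents B S) ∧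
    (¬ G.IsBalancedSet B (G.edgesIn (insert e S) (G.compOf S a₀)) →
      G.numBalComponents B (insert e S) + 1 = G.numBalComponents B S) := by
  have hcomps := G.components_insert_of_conn hconn
  have hKmem : G.compOf S a₀ ∈ G.components S := G.compOf_mem_components S a₀
  constructor
  · intro hbalK
    rw [G.numBalComponents_eq_ncard, G.numBalComponents_eq_ncard]
    congr 1
    ext W
    simp only [Set.mem_setOf_eq, hcomps]
    constructor
    · rintro ⟨hW, hbal⟩
      refine ⟨hW, ?_⟩
      by_cases hne : W = G.compOf S a₀
      · subst hne
        exact hallbal _ hW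
      · rwa [G.edgesIn_insert_of_ne ha₀ hW hne] at hbal
    · rintro ⟨hW, hbal⟩
      refine ⟨hW, ?_⟩
      by_cases hne : W = G.compOf S a₀
      · subst hne
        exact hbalK
      · rwa [G.edgesIn_insert_of_ne ha₀ hW hne]
  · intro hnbalK
    rw [G.numBalComponents_eq_ncard, G.numBalComponents_eq_ncard]
    have hset : {W : Set N | W ∈ G.components (insert e S) ∧
        G.IsBalancedSet B (G.edgesIn (insert e S) W)} =
        {W : Set N | W ∈ G.components S ∧ G.IsBalancedSet B (G.edgesIn S W)} \
          {G.compOf S a₀} := by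
      ext W
      simp only [Set.mem_setOf_eq, hcomps, Set.mem_diff, Set.mem_singleton_iff]
      constructor
      · rintro ⟨hW, hbal⟩
        by_cases hne : W = G.compOf S a₀
        · subst hne
          exact absurd hbal hnbalK
        · rw [G.edgesIn_insert_of_ne ha₀ hW hne] at hbal
          exact ⟨⟨hW, hbal⟩, hne⟩
      · rintro ⟨⟨hW, hbal⟩, hne⟩
        rw [← G.edgesIn_insert_of_ne ha₀ hW hne] at hbal
        exact ⟨hW, hbal⟩
    rw [hset]
    have hKbal : G.compOf S a₀ ∈ {W : Set N | W ∈ G.components S ∧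
        G.IsBalancedSet B (G.edgesIn S W)} := ⟨hKmem, hallbal _ hKmem⟩
    rw [Set.ncard_diff_singleton_of_mem hKbal]
    have h1 : 0 < {W : Set N | W ∈ G.components S ∧
        G.IsBalancedSet B (G.edgesIn S W)}.ncard :=
      (Set.ncard_pos (Set.toFinite _)).mpr ⟨_, hKbal⟩
    omega

/-- Inserting an edge joining two distinct components strictly decreases the number of
balanced components (when all components are balanced). -/
lemma numBal_insert_of_not_conn [Fintype N] (B : Set (Finset E)) (S : Set E) (e : E)
    (u v : N) (hends : G.ends e = {u, v}) (huv : u ≠ v) (hnc : ¬ G.nodeConn S u v)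
    (hallbal : ∀ W ∈ G.components S, G.IsBalancedSet B (G.edgesIn S W)) :
    G.numBalComponents B (insert e S) < G.numBalComponents B S := by
  classical
  have humem : u ∈ G.ends e := by rw [hends]; exact Finset.mem_insert_self _ _
  have hvmem : v ∈ G.ends e := by
    rw [hends]; exact Finset.mem_insert_of_mem (Finset.mem_singleton_self _)
  have hCuv : G.compOf S u ≠ G.compOf S v := by
    intro h
    apply hnc
    have : u ∈ G.compOf S v := h ▸ G.mem_compOf_self S u
    exact this
  set bOld := {W : Set N | W ∈ G.components S ∧ G.IsBalancedSet B (G.edgesIn S W)}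
    with hbOld
  set bNew := {W : Set N | W ∈ G.components (insert e S) ∧
    G.IsBalancedSet B (G.edgesIn (insert e S) W)} with hbNew
  have hCumem : G.compOf S u ∈ bOld := ⟨G.compOf_mem_components S u,
    hallbal _ (G.compOf_mem_components S u)⟩
  have hCvmem : G.compOf S v ∈ bOld := ⟨G.compOf_mem_components S v,
    hallbal _ (G.compOf_mem_components S v)⟩
  have hsub : bNew ⊆ (bOld \ {G.compOf S u, G.compOf S v}) ∪
      {G.compOf (insert e S) u} := by
    rintro W ⟨hW, hbal⟩
    by_cases hmem : u ∈ W ∨ v ∈ W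
    · right
      rcases hmem with hmem | hmem
      · exact G.eq_compOf_of_mem hW hmem
      · rw [G.eq_compOf_of_mem hW hmem]
        apply G.compOf_eq_of_conn
        apply G.nodeConn_symm
        exact G.nodeConn_of_adj ⟨e, Set.mem_insert _ _, humem, hvmem⟩
    · push_neg at hmem
      obtain ⟨hu, hv⟩ := hmem
      obtain ⟨w, rfl⟩ := hW
      have hWold : {x | G.nodeConn (insert e S) x w} = {x | G.nodeConn S x w} := by
        ext a
        simp only [Set.mem_setOf_eq]
        constructor
        · intro h
          rcases (G.nodeConn_insert_iff).mp h with h | ⟨p, hp, q, hq, h1, h2⟩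
          · exact h
          · exfalso
            rw [hends] at hq
            have hqv : q = u ∨ q = v := by simpa using hq
            rcases hqv with rfl | rfl
            · exact hu (G.nodeConn_mono (Set.subset_insert _ _) h2)
            · exact hv (G.nodeConn_mono (Set.subset_insert _ _) h2)
        · exact G.nodeConn_mono (Set.subset_insert _ _)
      left
      have hWcomp : {x | G.nodeConn S x w} ∈ G.components S := ⟨w, rfl⟩
      have huW : u ∉ {x | G.nodeConn S x w} := fun h =>
        hu (G.nodeConn_mono (Set.subset_insert _ _) h)
      have hedges : G.edgesIn (insert e S) {x | G.nodeConn (insert e S) x w} =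
          G.edgesIn S {x | G.nodeConn S x w} := by
        rw [hWold]
        ext f
        constructor
        · rintro ⟨hf, hfe⟩
          rcases hf with rfl | hf
          · exact absurd (hfe u humem) huW
          · exact ⟨hf, hfe⟩
        · rintro ⟨hf, hfe⟩
          exact ⟨Or.inr hf, hfe⟩
      rw [hedges] at hbal
      rw [hWold]
      refine ⟨⟨hWcomp, hbal⟩, ?_⟩
      simp only [Set.mem_insert_iff, Set.mem_singleton_iff]
      push_neg
      constructor
      · intro h
        apply huW
        rw [h]
        exact G.mem_compOf_self S u
      · intro h
        apply hv
        apply G.nodeConn_mono (Set.subset_insert _ _)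
        have hvm : v ∈ {x | G.nodeConn S x w} := by
          rw [h]; exact G.mem_compOf_self S v
        exact hvm
  have hfin : bOld.Finite := Set.toFinite _
  have hpair : ({G.compOf S u, G.compOf S v} : Set (Set N)) ⊆ bOld := by
    rintro W (rfl | rfl)
    · exact hCumem
    · exact hCvmem
  have hb2 : 2 ≤ bOld.ncard := by
    calc 2 = ({G.compOf S u, G.compOf S v} : Set (Set N)).ncard :=
          (Set.ncard_pair hCuv).symm
      _ ≤ bOld.ncard := Set.ncard_le_ncard hpair hfin
  have hcount : bNew.ncard ≤ (bOld.ncard - 2) + 1 := by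
    calc bNew.ncard ≤ ((bOld \ {G.compOf S u, G.compOf S v}) ∪
        {G.compOf (insert e S) u}).ncard := Set.ncard_le_ncard hsub (Set.toFinite _)
      _ ≤ (bOld \ {G.compOf S u, G.compOf S v}).ncard +
          ({G.compOf (insert e S) u} : Set (Set N)).ncard := Set.ncard_union_le _ _
      _ = (bOld.ncard - 2) + 1 := by
          rw [Set.ncard_singleton, Set.ncard_diff hpair (Set.toFinite _),
            Set.ncard_pair hCuv]
  rw [G.numBalComponents_eq_ncard, G.numBalComponents_eq_ncard, ← hbOld, ← hbNew]
  omega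

end MGraph
/-! ## Finitary extraction of subsets -/

section Fin

variable {P N : Type*} (G : ProjGeom P) (ν : N → P) (Ehat : Set P)
  (hE : ∀ x ∈ Ehat, x ∉ Set.range ν →
    ∃ pr : N × N, pr.1 ≠ pr.2 ∧ x ∈ G.line (ν pr.1) (ν pr.2))

lemma men_finitary_sub (S : Set ↥Ehat) {x : P} (hx : x ∈ G.span (Subtype.val '' S)) :
    ∃ S₀ : Finset ↥Ehat, ↑S₀ ⊆ S ∧ x ∈ G.span (Subtype.val '' (↑S₀ : Set ↥Ehat)) := by
  classical
  obtain ⟨F, hFsub, hFmem⟩ := G.mem_span_finitary hx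
  have hch : ∀ y ∈ F, ∃ ey : ↥Ehat, ey ∈ S ∧ (ey : P) = y := by
    intro y hy
    obtain ⟨ey, heyS, heq⟩ := hFsub (Finset.mem_coe.mpr hy)
    exact ⟨ey, heyS, heq⟩
  refine ⟨F.attach.image (fun y => (hch y.1 y.2).choose), ?_, ?_⟩
  · intro f hf
    obtain ⟨y, -, rfl⟩ := Finset.mem_image.mp (Finset.mem_coe.mp hf)
    exact (hch y.1 y.2).choose_spec.1
  · refine G.span_le_span ?_ hFmem
    intro y hy
    apply G.subset_span
    refine ⟨(hch y (Finset.mem_coe.mp hy)).choose,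
      Finset.mem_coe.mpr (Finset.mem_image.mpr ⟨⟨y, Finset.mem_coe.mp hy⟩,
        F.mem_attach _, rfl⟩), ?_⟩
    exact (hch y (Finset.mem_coe.mp hy)).choose_spec.2

end Fin
/-- Let `N̂ = ν(N)` be an independent set of points in a
projective geometry and let `Ehat ⊆ Ê^•(N̂)`.  The closed, balanced edge sets of
the frame matroid `G(Ω(N̂, Ehat))` are exactly the edge sets `S` whose
corresponding point sets `Ŝ` are the intersections of `Ehat` with cross-flats. -/
theorem stmt4 {P N : Type*} [Fintype N] (G : ProjGeom P) (ν : N → P)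
    (hν : Function.Injective ν) (hind : G.Indep (Set.range ν))
    (Ehat : Set P)
    (hE : ∀ x ∈ Ehat, x ∉ Set.range ν →
      ∃ pr : N × N, pr.1 ≠ pr.2 ∧ x ∈ G.line (ν pr.1) (ν pr.2)) :
    ∀ S : Set ↥Ehat,
      ((G.menGraph ν Ehat hE).IsBalancedSet (G.menBal ν Ehat hE) S ∧
        (G.menGraph ν Ehat hE).FrameClosed (G.menBal ν Ehat hE) S) ↔
      ∃ t : Set P, G.crossFlat ν t ∧ Subtype.val '' S = Ehat ∩ t := by
  classical
  intro S
  set MG := G.menGraph ν Ehat hE with hMGdef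
  set B := G.menBal ν Ehat hE with hBdef
  constructor
  · -- forward
    rintro ⟨hbalS, hclosed⟩
    refine ⟨G.span (Subtype.val '' S), ⟨G.isFlat_span _, ?_⟩, ?_⟩
    · -- cross-flat
      intro w hmem
      obtain ⟨S₀, hS₀sub, hmem₀⟩ := men_finitary_sub G Ehat S hmem
      have hbal₀ : MG.IsBalancedSet B (↑S₀ : Set ↥Ehat) :=
        MG.isBalancedSet_mono hbalS hS₀sub
      exact (men_key G ν Ehat hE hν hind S₀ hbal₀).1 w hmem₀
    · apply Set.Subset.antisymm
      · rintro p ⟨e, he, rfl⟩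
        exact ⟨e.2, G.subset_span ⟨e, he, rfl⟩⟩
      · rintro x ⟨hxE, hxspan⟩
        obtain ⟨S₀, hS₀sub, hmem₀⟩ := men_finitary_sub G Ehat S hxspan
        have hbal₀ : MG.IsBalancedSet B (↑S₀ : Set ↥Ehat) :=
          MG.isBalancedSet_mono hbalS hS₀sub
        have hkey := men_key G ν Ehat hE hν hind S₀ hbal₀
        by_cases hxr : x ∈ Set.range ν
        · exfalso
          obtain ⟨w, rfl⟩ := hxr
          exact hkey.1 w hmem₀
        · set e' : ↥Ehat := ⟨x, hxE⟩ with he'def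
          have hxr' : (e' : P) ∉ Set.range ν := hxr
          obtain ⟨a, b, hab, hends, hline⟩ :=
            menGraph_ends_not_range G ν Ehat hE (e := e') hxr'
          obtain ⟨hconnab, hxK⟩ := hkey.2 a b hab x hline hxr hmem₀
          have hconnends : ∀ p ∈ MG.ends e', ∀ q ∈ MG.ends e',
              MG.nodeConn (↑S₀ : Set ↥Ehat) p q := by
            intro p hp q hq
            rw [hends] at hp hq
            have hp' : p = a ∨ p = b := by simpa using hp
            have hq' : q = a ∨ q = b := by simpa using hq
            rcases hp' with rfl | rfl <;> rcases hq' with rfl | rfl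
            · exact MG.nodeConn_refl _ _
            · exact hconnab
            · exact MG.nodeConn_symm hconnab
            · exact MG.nodeConn_refl _ _
          have hamem : a ∈ MG.ends e' := by
            rw [hends]; exact Finset.mem_insert_self _ _
          have hallbal : ∀ W ∈ MG.components (↑S₀ : Set ↥Ehat),
              MG.IsBalancedSet B (MG.edgesIn (↑S₀ : Set ↥Ehat) W) := fun W _ =>
            MG.isBalancedSet_mono hbal₀ (MG.edgesIn_subset _ _)
          -- the new class is balanced, witnessed by the flat spanned by the class edges
          have hKbal : MG.IsBalancedSet B (MG.edgesIn (insert e' (↑S₀ : Set ↥Ehat))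
              (MG.compOf (↑S₀ : Set ↥Ehat) a)) := by
            have hsets : {f : ↥Ehat | f ∈ S₀ ∧ ∀ a' ∈ MG.ends f,
                MG.nodeConn (↑S₀ : Set ↥Ehat) a' a} =
                MG.edgesIn (↑S₀ : Set ↥Ehat) (MG.compOf (↑S₀ : Set ↥Ehat) a) := rfl
            rw [hsets] at hxK
            have hcrossK : G.crossFlat ν (G.span (Subtype.val ''
                MG.edgesIn (↑S₀ : Set ↥Ehat) (MG.compOf (↑S₀ : Set ↥Ehat) a))) := by
              refine ⟨G.isFlat_span _, ?_⟩
              intro w hw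
              set K₀ : Finset ↥Ehat := S₀.filter (fun f => ∀ a' ∈ MG.ends f,
                MG.nodeConn (↑S₀ : Set ↥Ehat) a' a) with hK₀def
              have hK₀eq : (↑K₀ : Set ↥Ehat) =
                  MG.edgesIn (↑S₀ : Set ↥Ehat) (MG.compOf (↑S₀ : Set ↥Ehat) a) := by
                ext f
                rw [Finset.mem_coe, hK₀def, Finset.mem_filter]
                exact Iff.rfl
              have hK₀bal : MG.IsBalancedSet B (↑K₀ : Set ↥Ehat) :=
                MG.isBalancedSet_mono hbal₀ (by rw [hK₀eq]; exact MG.edgesIn_subset _ _)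
              have := (men_key G ν Ehat hE hν hind K₀ hK₀bal).1 w
              rw [hK₀eq] at this
              exact this hw
            rw [MG.edgesIn_insert_self hamem hconnends]
            constructor
            · intro f hf
              rcases hf with rfl | hf
              · exact (menGraph_isLink_iff G ν Ehat hE).mpr hxr'
              · exact hbal₀.1 f (MG.edgesIn_subset _ _ hf)
            · intro C hC hcirc
              refine ⟨hcirc, _, hcrossK, ?_⟩
              intro f hf
              rcases hC hf with rfl | hf'
              · exact hxK
              · exact G.subset_span ⟨f, hf', rfl⟩
          have he'S : e' ∈ S := by
            apply hclosed e'
            refine ⟨S₀, hS₀sub, ?_⟩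
            have hnumbal := (MG.numBal_insert_of_conn B (↑S₀ : Set ↥Ehat) e' a hamem
              hconnends hallbal).1 hKbal
            simp only [MGraph.frameRk, Finset.coe_insert]
            rw [hnumbal]
          exact ⟨e', he'S, rfl⟩
  · -- backward
    rintro ⟨t, ⟨hflat, hcross⟩, hSt⟩
    have hSsub : ∀ e ∈ S, (e : P) ∈ t := by
      intro e he
      have : (e : P) ∈ Ehat ∩ t := by rw [← hSt]; exact ⟨e, he, rfl⟩
      exact this.2
    have hnotrS : ∀ e ∈ S, (e : P) ∉ Set.range ν := by
      rintro e he ⟨w, hw⟩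
      exact hcross w (hw ▸ hSsub e he)
    have hbalS : MG.IsBalancedSet B S := by
      constructor
      · intro e he
        exact (menGraph_isLink_iff G ν Ehat hE).mpr (hnotrS e he)
      · intro C hC hcirc
        exact ⟨hcirc, t, ⟨hflat, hcross⟩, fun f hf => hSsub f (hC hf)⟩
    refine ⟨hbalS, ?_⟩
    rintro e ⟨S₀, hS₀sub, hrk⟩
    by_cases heS : e ∈ S
    · exact heS
    have heS₀ : e ∉ S₀ := fun h => heS (hS₀sub (Finset.mem_coe.mpr h))
    have hbal₀ : MG.IsBalancedSet B (↑S₀ : Set ↥Ehat) :=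
      MG.isBalancedSet_mono hbalS hS₀sub
    have hallbal : ∀ W ∈ MG.components (↑S₀ : Set ↥Ehat),
        MG.IsBalancedSet B (MG.edgesIn (↑S₀ : Set ↥Ehat) W) := fun W _ =>
      MG.isBalancedSet_mono hbal₀ (MG.edgesIn_subset _ _)
    have hble : MG.numBalComponents B (↑S₀ : Set ↥Ehat) ≤ Fintype.card N :=
      MG.numBal_le_card B _
    simp only [MGraph.frameRk, Finset.coe_insert] at hrk
    by_cases hxr : (e : P) ∈ Set.range ν
    · -- half edge: impossible
      exfalso
      obtain ⟨w, hendsw, hnuw⟩ := menGraph_ends_range G ν Ehat hE hxr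
      have hwmem : w ∈ MG.ends e := by rw [hendsw]; exact Finset.mem_singleton_self _
      have hconnends : ∀ p ∈ MG.ends e, ∀ q ∈ MG.ends e,
          MG.nodeConn (↑S₀ : Set ↥Ehat) p q := by
        intro p hp q hq
        rw [hendsw] at hp hq
        rw [Finset.mem_singleton.mp hp, Finset.mem_singleton.mp hq]
        exact MG.nodeConn_refl _ _
      have hnotbal : ¬ MG.IsBalancedSet B (MG.edgesIn (insert e (↑S₀ : Set ↥Ehat))
          (MG.compOf (↑S₀ : Set ↥Ehat) w)) := by
        intro hb
        have hemem : e ∈ MG.edgesIn (insert e (↑S₀ : Set ↥Ehat))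
            (MG.compOf (↑S₀ : Set ↥Ehat) w) := by
          refine ⟨Set.mem_insert _ _, ?_⟩
          intro p hp
          rw [hendsw] at hp
          rw [Finset.mem_singleton.mp hp]
          exact MG.mem_compOf_self _ _
        have := hb.1 e hemem
        rw [MGraph.IsLink, hendsw, Finset.card_singleton] at this
        omega
      have := (MG.numBal_insert_of_conn B (↑S₀ : Set ↥Ehat) e w hwmem
        hconnends hallbal).2 hnotbal
      omega
    · obtain ⟨a, b, hab, hends, hline⟩ := menGraph_ends_not_range G ν Ehat hE hxr
      have hamem : a ∈ MG.ends e := by rw [hends]; exact Finset.mem_insert_self _ _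
      have hbmem : b ∈ MG.ends e := by
        rw [hends]; exact Finset.mem_insert_of_mem (Finset.mem_singleton_self _)
      by_cases hconn : MG.nodeConn (↑S₀ : Set ↥Ehat) a b
      · -- same class; the new class must be balanced, giving a balanced circle
        have hconnends : ∀ p ∈ MG.ends e, ∀ q ∈ MG.ends e,
            MG.nodeConn (↑S₀ : Set ↥Ehat) p q := by
          intro p hp q hq
          rw [hends] at hp hq
          have hp' : p = a ∨ p = b := by simpa using hp
          have hq' : q = a ∨ q = b := by simpa using hq
          rcases hp' with rfl | rfl <;> rcases hq' with rfl | rfl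
          · exact MG.nodeConn_refl _ _
          · exact hconn
          · exact MG.nodeConn_symm hconn
          · exact MG.nodeConn_refl _ _
        have hKbal : MG.IsBalancedSet B (MG.edgesIn (insert e (↑S₀ : Set ↥Ehat))
            (MG.compOf (↑S₀ : Set ↥Ehat) a)) := by
          by_contra hnb
          have := (MG.numBal_insert_of_conn B (↑S₀ : Set ↥Ehat) e a hamem
            hconnends hallbal).2 hnb
          omega
        -- build the circle through e
        have hcard2 : ∀ f ∈ (↑S₀ : Set ↥Ehat), (MG.ends f).card = 2 := hbal₀.1
        obtain ⟨m, hwalk⟩ := MGraph.exists_walkN MG hcard2 hconn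
        have hm1 : 1 ≤ m := by
          rcases Nat.eq_zero_or_pos m with rfl | h
          · exact absurd (MGraph.WalkN.eq_of_zero MG hwalk) hab
          · exact h
        obtain ⟨vv, ee, hwfun, h0, hmend⟩ := MGraph.WalkN.toIsWalk MG hwalk hm1
        obtain ⟨m', vv', ee', hw', h0', hm', hinj'⟩ :=
          MGraph.exists_path MG hwfun h0 hmend
        have hm'1 : 1 ≤ m' := by
          by_contra h
          have h0'' : m' = 0 := by omega
          apply hab
          rw [← h0', ← hm', h0'']
        have hendse : MG.ends e = {vv' 0, vv' m'} := by rw [h0', hm']; exact hends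
        have hnew : ∀ i < m', e ≠ ee' i := by
          intro i hi heq
          exact heS₀ (heq ▸ Finset.mem_coe.mp (hw' i hi).1)
        obtain ⟨C, hcirc, hmemC⟩ := MGraph.circle_of_path MG hw' hinj' hm'1 hendse hnew
        have hCsub : ↑C ⊆ MG.edgesIn (insert e (↑S₀ : Set ↥Ehat))
            (MG.compOf (↑S₀ : Set ↥Ehat) a) := by
          intro f hf
          rcases (hmemC f).mp (Finset.mem_coe.mp hf) with rfl | ⟨i, hi, rfl⟩
          · refine ⟨Set.mem_insert _ _, ?_⟩
            intro p hp
            exact MG.nodeConn_symm (hconnends a hamem p hp)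
          · obtain ⟨hfS, hfe, -⟩ := hw' i hi
            refine ⟨Set.mem_insert_of_mem _ hfS, ?_⟩
            intro p hp
            rw [hfe] at hp
            have hp' : p = vv' i ∨ p = vv' (i + 1) := by simpa using hp
            have hci : MG.nodeConn (↑S₀ : Set ↥Ehat) (vv' 0) (vv' i) :=
              MGraph.IsWalk.conn_start MG hw' i (by omega)
            have hci1 : MG.nodeConn (↑S₀ : Set ↥Ehat) (vv' 0) (vv' (i + 1)) :=
              MGraph.IsWalk.conn_start MG hw' (i + 1) (by omega)
            rcases hp' with rfl | rfl
            · exact (MG.nodeConn_symm hci).trans (h0' ▸ MG.nodeConn_refl _ a)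
            · exact (MG.nodeConn_symm hci1).trans (h0' ▸ MG.nodeConn_refl _ a)
        obtain ⟨-, t', hcross', hpts'⟩ := hKbal.2 C hCsub hcirc
        have hchain : ∀ i < m', ((ee' i : P) ∈ G.line (ν (vv' i)) (ν (vv' (i + 1)))) ∧
            ((ee' i : P) ∉ Set.range ν) ∧ (ee' i : P) ∈ t' := by
          intro i hi
          obtain ⟨hfS, hfe, hfne⟩ := hw' i hi
          have hfS' : ee' i ∈ (↑S₀ : Set ↥Ehat) := hfS
          have hnr : (ee' i : P) ∉ Set.range ν := hnotrS _ (hS₀sub hfS')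
          exact ⟨menGraph_line_of_ends G ν Ehat hE hnr hfe hfne, hnr,
            hpts' _ ((hmemC _).mpr (Or.inr ⟨i, hi, rfl⟩))⟩
        have hxline : (e : P) ∈ G.line (ν (vv' 0)) (ν (vv' m')) := by
          rw [h0', hm']; exact hline
        have hmen := menelaus G ν hν hind m' vv' (fun i => (ee' i : P)) t' hcross'
          hinj' hchain hm'1 (e : P) hxline hxr
          (hpts' e ((hmemC e).mpr (Or.inl rfl)))
        -- hence (e : P) lies in t, so e ∈ S
        have hespan : (e : P) ∈ t := by
          have hsub2 : {p : P | ∃ i < m', p = ((ee' i : ↥Ehat) : P)} ⊆ t := by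
            rintro p ⟨i, hi, rfl⟩
            exact hSsub _ (hS₀sub ((hw' i hi).1))
          exact G.span_le hflat hsub2 hmen
        have : (e : P) ∈ Subtype.val '' S := by
          rw [hSt]
          exact ⟨e.2, hespan⟩
        obtain ⟨f, hfS, hfe⟩ := this
        have : f = e := Subtype.val_injective hfe
        exact this ▸ hfS
      · -- different classes: impossible
        exfalso
        have := MG.numBal_insert_of_not_conn B (↑S₀ : Set ↥Ehat) e a b hends hab
          hconn hallbal
        omega
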